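/- arXiv:1202.2878 — 4 statements merged into one kernel-verified Lean document; each statement's English description precedes it below -/
import Mathlib

section
/- Let S_n be subdivisions and S a strict subdivision (s_k < s_{k+1} for all k < |S|) with |S| = +∞, and let f_n ∈ D, ζ = (ζ_k)_{k≥1} ∈ D^∞ where each ζ_k is an excursion. Define E^S(f) = (e_k^S(f))_{k≥1} with e_k^S(f)(t) = f(t + s_{2k−1}) for 0 ≤ t < s_{2k} − s_{2k−1} and a otherwise, and Ψ^S(ζ)(t) = ζ_{k+1}(t − s_{2k+1}) if t ∈ [s_{2k+1}, s_{2k+2}) for some k, and a otherwise. If S_n → S pointwise and E^{S_n}(f_n) → ζ componentwise in the J1 topology, then Φ^{S_n}(f_n) → Ψ^S(ζ) in the J1 topology. -/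
open scoped NNReal ENNReal Topology
open Filter Set

noncomputable section

/-- A càdlàg function `[0,∞) → V`: right-continuous with left limits
(at every positive time). -/
def Cadlag {V : Type*} [PseudoMetricSpace V] (f : ℝ≥0 → V) : Prop :=
  (∀ t : ℝ≥0, ContinuousWithinAt f (Set.Ici t) t) ∧
  ∀ t : ℝ≥0, 0 < t → ∃ l : V, Filter.Tendsto f (nhdsWithin t (Set.Iio t)) (nhds l)

/-- A time change: an increasing bijection of `[0,∞)`. -/
def IsTimeChange (l : ℝ≥0 → ℝ≥0) : Prop := StrictMono l ∧ Function.Bijective l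

/-- Convergence in the Skorokhod J1 topology, along a filter `F`: there are
time changes `l i` with `‖l i − Id‖_∞ → 0` and uniform convergence of
`f i ∘ l i` to `g` on `[0,m]` for every `m` in some unbounded set. -/
def J1Tendsto {V : Type*} [PseudoMetricSpace V] {ι : Type*} (F : Filter ι)
    (f : ι → ℝ≥0 → V) (g : ℝ≥0 → V) : Prop :=
  ∃ l : ι → ℝ≥0 → ℝ≥0, (∀ i, IsTimeChange (l i)) ∧
    Filter.Tendsto (fun i => ⨆ s : ℝ≥0, edist (l i s) s) F (nhds 0) ∧
    ∃ M : Set ℝ≥0, (∀ r : ℝ≥0, ∃ m ∈ M, r ≤ m) ∧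
      ∀ m ∈ M, Filter.Tendsto
        (fun i => ⨆ s : Set.Icc (0:ℝ≥0) m, edist (f i (l i (s:ℝ≥0))) (g (s:ℝ≥0)))
        F (nhds 0)

/-- First hitting time of `a` : `T(f) = inf{t > 0 : f t = a} ∈ [0,∞]`. -/
def hitTime {V : Type*} [PseudoMetricSpace V] (a : V) (f : ℝ≥0 → V) : ℝ≥0∞ :=
  sInf ((fun t : ℝ≥0 => (t : ℝ≥0∞)) '' {t : ℝ≥0 | 0 < t ∧ f t = a})

/-- An excursion: a càdlàg path which sticks at `a` from its first hitting
time of `a` on. -/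
def IsExcursion {V : Type*} [PseudoMetricSpace V] (a : V) (f : ℝ≥0 → V) : Prop :=
  Cadlag f ∧ ∀ t : ℝ≥0, hitTime a f ≤ (t : ℝ≥0∞) → f t = a

end

noncomputable section

/-- A subdivision of `[0,∞)`: a nondecreasing `[0,∞]`-valued sequence whose
half-open intervals `[s_k, s_{k+1})` cover `[0,∞)`. -/
def IsSubdivision (S : ℕ → ℝ≥0∞) : Prop :=
  Monotone S ∧ ∀ t : ℝ≥0, ∃ k : ℕ, S k ≤ (t : ℝ≥0∞) ∧ (t : ℝ≥0∞) < S (k + 1)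

open Classical in
/-- The truncation operator `Φ^S`: keep `f` on the even intervals
`[s_{2k+1}, s_{2k+2})`, truncate to `a` elsewhere. -/
def PhiSub {V : Type*} (a : V) (S : ℕ → ℝ≥0∞) (f : ℝ≥0 → V) : ℝ≥0 → V :=
  fun t => if ∃ k : ℕ, S (2*k+1) ≤ (t : ℝ≥0∞) ∧ (t : ℝ≥0∞) < S (2*k+2) then f t else a

end

noncomputable section

open Classical in
/-- The patching operator `Ψ^S`: place the path `ζ_{k+1}` on the interval
`[s_{2k+1}, s_{2k+2})`, and put `a` elsewhere. -/
def PsiSub {V : Type*} (a : V) (S : ℕ → ℝ≥0∞) (Z : ℕ → ℝ≥0 → V) : ℝ≥0 → V :=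
  fun t =>
    if h : ∃ k : ℕ, S (2*k+1) ≤ (t : ℝ≥0∞) ∧ (t : ℝ≥0∞) < S (2*k+2) then
      Z (h.choose + 1) (t - (S (2*h.choose+1)).toNNReal)
    else a

open Classical in
/-- The decomposition operator `E^S`: `e_k^S(f)(t) = f(t + s_{2k−1})` for
`t < s_{2k} − s_{2k−1}`, and `a` otherwise (`k ≥ 1`). -/
def ESub {V : Type*} (a : V) (S : ℕ → ℝ≥0∞) (f : ℝ≥0 → V) : ℕ → ℝ≥0 → V :=
  fun k t =>
    if (t : ℝ≥0∞) < S (2*k) - S (2*k-1) then f (t + (S (2*k-1)).toNNReal) else a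

end


namespace StPf
noncomputable section
set_option linter.unusedSectionVars false



lemma exists_pos_coe_le {ε : ℝ≥0∞} (h : 0 < ε) : ∃ δ : ℝ≥0, 0 < δ ∧ (δ : ℝ≥0∞) ≤ ε := by
  rcases eq_or_ne ε ⊤ with rfl | hne
  · exact ⟨1, one_pos, le_top⟩
  · exact ⟨ε.toNNReal, ENNReal.toNNReal_pos h.ne' hne, (ENNReal.coe_toNNReal hne).le⟩

lemma nndist_le_iff {a b c : ℝ≥0} : nndist a b ≤ c ↔ a ≤ b + c ∧ b ≤ a + c := by
  rw [NNReal.nndist_eq, max_le_iff, tsub_le_iff_right, tsub_le_iff_right]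
  constructor
  · rintro ⟨h1, h2⟩; exact ⟨by rwa [add_comm], by rwa [add_comm]⟩
  · rintro ⟨h1, h2⟩; exact ⟨by rwa [add_comm] at h1, by rwa [add_comm] at h2⟩

lemma edist_le_coe_iff {a b c : ℝ≥0} : edist a b ≤ (c : ℝ≥0∞) ↔ a ≤ b + c ∧ b ≤ a + c := by
  rw [edist_nndist, ENNReal.coe_le_coe, nndist_le_iff]

lemma edist_nn_le {a b c : ℝ≥0} (h1 : a ≤ b + c) (h2 : b ≤ a + c) : edist a b ≤ (c : ℝ≥0∞) :=
  edist_le_coe_iff.2 ⟨h1, h2⟩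

lemma edist_add_le_nn (a b c d : ℝ≥0) : edist (a + c) (b + d) ≤ edist a b + edist c d := by
  rw [edist_nndist, edist_nndist, edist_nndist, ← ENNReal.coe_add, ENNReal.coe_le_coe]
  refine nndist_le_iff.2 ⟨?_, ?_⟩
  · calc a + c ≤ (b + nndist a b) + (d + nndist c d) :=
        add_le_add (NNReal.le_add_nndist a b) (NNReal.le_add_nndist c d)
      _ = b + d + (nndist a b + nndist c d) := by ring
  · calc b + d ≤ (a + nndist b a) + (c + nndist d c) :=
        add_le_add (NNReal.le_add_nndist b a) (NNReal.le_add_nndist d c)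
      _ = a + c + (nndist a b + nndist c d) := by rw [nndist_comm b a, nndist_comm d c]; ring

/-- The affine map sending `[x₁, x₂]` to `[y₁, y₂]`. -/
noncomputable def aff (x₁ x₂ y₁ y₂ t : ℝ≥0) : ℝ≥0 := y₁ + (t - x₁) * ((y₂ - y₁) / (x₂ - x₁))

lemma aff_left (x₁ x₂ y₁ y₂ : ℝ≥0) : aff x₁ x₂ y₁ y₂ x₁ = y₁ := by
  simp [aff]

lemma aff_right {x₁ x₂ y₁ y₂ : ℝ≥0} (hx : x₁ < x₂) (hy : y₁ ≤ y₂) :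
    aff x₁ x₂ y₁ y₂ x₂ = y₂ := by
  have hc : x₂ - x₁ ≠ 0 := (tsub_pos_of_lt hx).ne'
  rw [aff, mul_comm, div_mul_cancel₀ _ hc, add_tsub_cancel_of_le hy]

lemma aff_strictMonoOn {x₁ x₂ y₁ y₂ : ℝ≥0} (hx : x₁ < x₂) (hy : y₁ < y₂) :
    StrictMonoOn (aff x₁ x₂ y₁ y₂) (Ici x₁) := by
  intro s hs t _ hst
  have hr : 0 < (y₂ - y₁) / (x₂ - x₁) :=
    div_pos (tsub_pos_of_lt hy) (tsub_pos_of_lt hx)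
  have h2 : s - x₁ < t - x₁ := tsub_lt_tsub_right_of_le hs hst
  exact add_lt_add_right (mul_lt_mul_of_pos_right h2 hr) y₁

lemma aff_mem {x₁ x₂ y₁ y₂ t : ℝ≥0} (hx : x₁ < x₂) (hy : y₁ ≤ y₂) (ht : t ∈ Icc x₁ x₂) :
    aff x₁ x₂ y₁ y₂ t ∈ Icc y₁ y₂ := by
  constructor
  · exact le_self_add
  · have h1 : (t - x₁) * ((y₂ - y₁) / (x₂ - x₁)) ≤ (x₂ - x₁) * ((y₂ - y₁) / (x₂ - x₁)) :=
      mul_le_mul_left (tsub_le_tsub_right ht.2 _) _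
    have h2 : (x₂ - x₁) * ((y₂ - y₁) / (x₂ - x₁)) = y₂ - y₁ := by
      rw [mul_comm, div_mul_cancel₀ _ (tsub_pos_of_lt hx).ne']
    calc aff x₁ x₂ y₁ y₂ t ≤ y₁ + (y₂ - y₁) := by
          rw [aff]; exact add_le_add_right (h1.trans (le_of_eq h2)) _
      _ = y₂ := add_tsub_cancel_of_le hy

lemma aff_surjOn {x₁ x₂ y₁ y₂ : ℝ≥0} (hx : x₁ < x₂) (hy : y₁ ≤ y₂) :
    SurjOn (aff x₁ x₂ y₁ y₂) (Icc x₁ x₂) (Icc y₁ y₂) := by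
  rcases eq_or_lt_of_le hy with rfl | hy'
  · intro y hy2
    have : y = y₁ := le_antisymm hy2.2 hy2.1
    exact ⟨x₁, ⟨le_refl _, hx.le⟩, by rw [this, aff_left]⟩
  · intro y hy2
    have hq : (0:ℝ≥0) < y₂ - y₁ := tsub_pos_of_lt hy'
    have hc : (0:ℝ≥0) < x₂ - x₁ := tsub_pos_of_lt hx
    refine ⟨x₁ + (y - y₁) * ((x₂ - x₁) / (y₂ - y₁)), ⟨le_self_add, ?_⟩, ?_⟩
    · have h1 : (y - y₁) * ((x₂ - x₁) / (y₂ - y₁)) ≤ (y₂ - y₁) * ((x₂ - x₁) / (y₂ - y₁)) :=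
        mul_le_mul_left (tsub_le_tsub_right hy2.2 _) _
      have h2 : (y₂ - y₁) * ((x₂ - x₁) / (y₂ - y₁)) = x₂ - x₁ := by
        rw [mul_comm, div_mul_cancel₀ _ hq.ne']
      calc x₁ + (y - y₁) * ((x₂ - x₁) / (y₂ - y₁)) ≤ x₁ + (x₂ - x₁) :=
            add_le_add_right (h1.trans (le_of_eq h2)) _
        _ = x₂ := add_tsub_cancel_of_le hx.le
    · rw [aff, add_tsub_cancel_left]
      have : (y - y₁) * ((x₂ - x₁) / (y₂ - y₁)) * ((y₂ - y₁) / (x₂ - x₁)) = y - y₁ := by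
        field_simp
      rw [this, add_tsub_cancel_of_le hy2.1]

lemma real_aff_bound {X₁ X₂ Y₁ Y₂ T C : ℝ} (hx : X₁ < X₂) (hT1 : X₁ ≤ T) (hT2 : T ≤ X₂)
    (h1 : |Y₁ - X₁| ≤ C) (h2 : |Y₂ - X₂| ≤ C) :
    |Y₁ + (T - X₁) * ((Y₂ - Y₁) / (X₂ - X₁)) - T| ≤ C := by
  have hpos : (0:ℝ) < X₂ - X₁ := by linarith
  have key : Y₁ + (T - X₁) * ((Y₂ - Y₁) / (X₂ - X₁)) - T
      = ((X₂ - T) * (Y₁ - X₁) + (T - X₁) * (Y₂ - X₂)) / (X₂ - X₁) := by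
    field_simp
    ring
  have h3 : |(X₂ - T) * (Y₁ - X₁) + (T - X₁) * (Y₂ - X₂)| ≤ (X₂ - X₁) * C := by
    calc |(X₂ - T) * (Y₁ - X₁) + (T - X₁) * (Y₂ - X₂)|
        ≤ |(X₂ - T) * (Y₁ - X₁)| + |(T - X₁) * (Y₂ - X₂)| := abs_add_le _ _
      _ = (X₂ - T) * |Y₁ - X₁| + (T - X₁) * |Y₂ - X₂| := by
          rw [abs_mul, abs_mul, abs_of_nonneg (by linarith : (0:ℝ) ≤ X₂ - T),
            abs_of_nonneg (by linarith : (0:ℝ) ≤ T - X₁)]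
      _ ≤ (X₂ - T) * C + (T - X₁) * C := by
          refine add_le_add (mul_le_mul_of_nonneg_left h1 (by linarith))
            (mul_le_mul_of_nonneg_left h2 (by linarith))
      _ = (X₂ - X₁) * C := by ring
  rw [key, abs_div, abs_of_pos hpos, div_le_iff₀ hpos]
  linarith [h3]

lemma dist_of_edist_le {a b : ℝ≥0} {c : ℝ≥0} (h : edist a b ≤ (c:ℝ≥0∞)) : dist a b ≤ (c:ℝ) := by
  rw [edist_nndist, ENNReal.coe_le_coe] at h
  rw [← coe_nndist]; exact_mod_cast h

lemma edist_of_dist_le {a b : ℝ≥0} {c : ℝ≥0} (h : dist a b ≤ (c:ℝ)) : edist a b ≤ (c:ℝ≥0∞) := by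
  rw [edist_nndist, ENNReal.coe_le_coe, ← NNReal.coe_le_coe, coe_nndist]; exact h

lemma aff_dev {x₁ x₂ y₁ y₂ t : ℝ≥0} (hx : x₁ < x₂) (hy : y₁ ≤ y₂) (ht : t ∈ Icc x₁ x₂)
    {c : ℝ≥0∞} (h1 : edist y₁ x₁ ≤ c) (h2 : edist y₂ x₂ ≤ c) :
    edist (aff x₁ x₂ y₁ y₂ t) t ≤ c := by
  rcases eq_or_ne c ⊤ with rfl | hc
  · exact le_top
  · lift c to ℝ≥0 using hc
    have h1' := dist_of_edist_le h1
    have h2' := dist_of_edist_le h2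
    refine edist_of_dist_le ?_
    have hcoe : ((aff x₁ x₂ y₁ y₂ t : ℝ≥0) : ℝ)
        = (y₁:ℝ) + ((t:ℝ) - x₁) * (((y₂:ℝ) - y₁) / ((x₂:ℝ) - x₁)) := by
      rw [aff, NNReal.coe_add, NNReal.coe_mul, NNReal.coe_div,
        NNReal.coe_sub ht.1, NNReal.coe_sub hy, NNReal.coe_sub hx.le]
    rw [NNReal.dist_eq, hcoe]
    rw [NNReal.dist_eq] at h1' h2'
    exact real_aff_bound (by exact_mod_cast hx) (by exact_mod_cast ht.1)
      (by exact_mod_cast ht.2) h1' h2'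





section Glue

variable (b : ℕ → ℝ≥0) (g : ℕ → ℝ≥0 → ℝ≥0) (hex : ∀ t : ℝ≥0, ∃ i, t < b (i + 1))

/-- Glue countably many pieces `g i` on `[b i, b (i+1)]` into one function. -/
noncomputable def glueFun : ℝ≥0 → ℝ≥0 := fun t => g (Nat.find (hex t)) t

variable {b g}
variable (hb0 : b 0 = 0) (hbmono : Monotone b)
  (hglue : ∀ i, g i (b (i + 1)) = g (i + 1) (b (i + 1)))
  (hmono : ∀ i, StrictMonoOn (g i) (Icc (b i) (b (i + 1))))

include hb0 in
lemma glue_idx_le (t : ℝ≥0) : b (Nat.find (hex t)) ≤ t := by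
  rcases Nat.eq_zero_or_pos (Nat.find (hex t)) with h | h
  · rw [h, hb0]; exact zero_le
  · obtain ⟨i, hi⟩ := Nat.exists_eq_add_of_lt h
    have := Nat.find_min (hex t) (show i < Nat.find (hex t) by omega)
    push_neg at this
    have h2 : Nat.find (hex t) = i + 1 := by omega
    rw [h2]; exact this

include hbmono hglue in
lemma glue_agree : ∀ j i, i ≤ j → ∀ x : ℝ≥0, b i ≤ x → x ≤ b (i + 1) → b j ≤ x →
    x ≤ b (j + 1) → g i x = g j x := by
  intro j
  induction j with
  | zero => intro i hi x _ _ _ _; rw [Nat.le_zero.mp hi]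
  | succ j ih =>
    intro i hi x h1 h2 h3 h4
    rcases Nat.lt_or_ge i (j+1) with h | h
    · have hxbj : x = b (j + 1) := le_antisymm (h2.trans (hbmono (by omega))) h3
      have h5 : g i x = g j x := by
        refine ih i (by omega) x h1 h2 ?_ ?_
        · rw [hxbj]; exact hbmono (by omega)
        · rw [hxbj]
      rw [h5, hxbj, hglue j]
    · have : i = j + 1 := le_antisymm hi h
      rw [this]

omit hb0 in
include hbmono hglue hmono in
lemma glue_chain : ∀ i j, i < j → g i (b (i + 1)) ≤ g j (b j) := by
  intro i j
  induction j with
  | zero => omega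
  | succ j ih =>
    intro hij
    rcases Nat.lt_or_ge i j with h | h
    · calc g i (b (i + 1)) ≤ g j (b j) := ih h
        _ ≤ g j (b (j + 1)) := by
            refine (hmono j).monotoneOn ⟨le_refl _, hbmono (by omega)⟩
              ⟨hbmono (by omega), le_refl _⟩ (hbmono (by omega))
        _ = g (j + 1) (b (j + 1)) := hglue j
    · have : i = j := by omega
      rw [this, hglue j]

include hb0 hbmono hglue in
lemma glue_eq {i : ℕ} {s : ℝ≥0} (h1 : b i ≤ s) (h2 : s ≤ b (i + 1)) :
    glueFun b g hex s = g i s := by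
  have hj1 : b (Nat.find (hex s)) ≤ s := glue_idx_le hex hb0 s
  have hj2 : s ≤ b (Nat.find (hex s) + 1) := (Nat.find_spec (hex s)).le
  rcases le_total i (Nat.find (hex s)) with h | h
  · exact (glue_agree hbmono hglue _ i h s h1 h2 hj1 hj2).symm
  · exact glue_agree hbmono hglue i _ h s hj1 hj2 h1 h2

include hb0 hbmono hglue hmono in
lemma glue_strictMono : StrictMono (glueFun b g hex) := by
  intro s t hst
  set i := Nat.find (hex s) with hi
  set j := Nat.find (hex t) with hj
  have hsi1 : b i ≤ s := glue_idx_le hex hb0 s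
  have hsi2 : s < b (i + 1) := Nat.find_spec (hex s)
  have htj1 : b j ≤ t := glue_idx_le hex hb0 t
  have htj2 : t < b (j + 1) := Nat.find_spec (hex t)
  have hij : i ≤ j := Nat.find_min' (hex s) (hst.trans htj2)
  show g i s < g j t
  rcases eq_or_lt_of_le hij with h | h
  · rw [← h] at htj1 htj2 ⊢
    exact hmono i ⟨hsi1, hsi2.le⟩ ⟨hsi1.trans hst.le, htj2.le⟩ hst
  · have h1 : g i s < g i (b (i + 1)) :=
      hmono i ⟨hsi1, hsi2.le⟩ ⟨hbmono (by omega), le_refl _⟩ hsi2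
    have h2 : g i (b (i + 1)) ≤ g j (b j) := glue_chain hbmono hglue hmono i j h
    have h3 : g j (b j) ≤ g j t :=
      (hmono j).monotoneOn ⟨le_refl _, hbmono (by omega)⟩ ⟨htj1, htj2.le⟩ htj1
    exact h1.trans_le (h2.trans h3)

include hb0 hbmono hglue hmono in
lemma glue_surjective
    (hsurj : ∀ i, SurjOn (g i) (Icc (b i) (b (i + 1))) (Icc (g i (b i)) (g i (b (i + 1)))))
    (hg00 : g 0 0 = 0) (hvex : ∀ y : ℝ≥0, ∃ i, y ≤ g i (b (i + 1))) :
    Function.Surjective (glueFun b g hex) := by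
  intro y
  set j := Nat.find (hvex y) with hjdef
  have hup : y ≤ g j (b (j + 1)) := Nat.find_spec (hvex y)
  have hlo : g j (b j) ≤ y := by
    rcases Nat.eq_zero_or_pos j with h | h
    · rw [h, hb0, hg00]; exact zero_le
    · obtain ⟨j', hj'⟩ : ∃ j', j = j' + 1 := ⟨j - 1, by omega⟩
      have hmin := Nat.find_min (hvex y) (show j' < j by omega)
      push_neg at hmin
      rw [hj', ← hglue j']
      exact hmin.le
  obtain ⟨x, hx, hgx⟩ := hsurj j ⟨hlo, hup⟩
  exact ⟨x, by rw [glue_eq hex hb0 hbmono hglue hx.1 hx.2]; exact hgx⟩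

include hb0 in
lemma glue_dev {c : ℝ≥0∞}
    (hdev : ∀ i, ∀ s ∈ Icc (b i) (b (i + 1)), edist (g i s) s ≤ c) (s : ℝ≥0) :
    edist (glueFun b g hex s) s ≤ c :=
  hdev _ s ⟨glue_idx_le hex hb0 s, (Nat.find_spec (hex s)).le⟩

end Glue


section Construction

variable (S Sn' : ℕ → ℝ≥0∞) (lam' : ℕ → ℝ≥0 → ℝ≥0) (K : ℕ)

/-- `toNNReal` of a subdivision. -/
def Uof (j : ℕ) : ℝ≥0 := (S j).toNNReal
/-- length of the `k`-th live interval. -/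
def dOf (k : ℕ) : ℝ≥0 := Uof S (2*k+2) - Uof S (2*k+1)
/-- preimage of the live length under the local time change. -/
def uSt (k : ℕ) : ℝ≥0 := Function.invFun (lam' k) (dOf Sn' k)
/-- switch point on the `k`-th live interval. -/
def wOf (k : ℕ) : ℝ≥0 := min (uSt Sn' lam' k) (dOf S k)
/-- end point of the patched region. -/
def POf : ℝ≥0 := max (Uof S (2*K+1)) (Uof Sn' (2*K+1)) + 1

/-- breakpoints of the glued global time change. -/
def bFun : ℕ → ℝ≥0 := fun i =>
  if i = 0 then 0
  else if i ≤ 2*K+1 then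
    (if i % 2 = 1 then Uof S i else Uof S (i-1) + wOf S Sn' lam' ((i-2)/2))
  else POf S Sn' K + ((i - (2*K+2) : ℕ) : ℝ≥0)

/-- pieces of the glued global time change. -/
noncomputable def gFun : ℕ → ℝ≥0 → ℝ≥0 := fun i =>
  if i = 0 then aff 0 (Uof S 1) 0 (Uof Sn' 1)
  else if i ≤ 2*K then
    (if i % 2 = 1 then fun t => Uof Sn' i + lam' ((i-1)/2) (t - Uof S i)
     else aff (bFun S Sn' lam' K i) (bFun S Sn' lam' K (i+1))
       (Uof Sn' (i-1) + lam' ((i-2)/2) (wOf S Sn' lam' ((i-2)/2))) (Uof Sn' (i+1)))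
  else if i = 2*K+1 then aff (Uof S (2*K+1)) (POf S Sn' K) (Uof Sn' (2*K+1)) (POf S Sn' K)
  else id

/-- the conditions under which the construction works. -/
def GoodP : Prop :=
  (∀ j, j ≤ 2*K+1 → Sn' j ≠ ⊤) ∧
  (∀ k, k < K → Uof Sn' (2*k+2) < Uof Sn' (2*k+3)) ∧
  (∀ k, k < K → uSt Sn' lam' k ≤ dOf S k + 1) ∧
  (∀ k, k < K → 0 < dOf Sn' k) ∧ 0 < Uof Sn' 1

lemma bFun_ex : ∀ t : ℝ≥0, ∃ i, t < bFun S Sn' lam' K (i+1) := by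
  intro t
  obtain ⟨m, hm⟩ := exists_nat_gt t
  refine ⟨2*K+2+m, ?_⟩
  unfold bFun
  rw [if_neg (by omega), if_neg (by omega)]
  have h1 : ((2*K+2+m+1) - (2*K+2) : ℕ) = m+1 := by omega
  rw [h1]
  calc t < (m : ℝ≥0) := hm
    _ ≤ ((m+1 : ℕ) : ℝ≥0) := by
        rw [Nat.cast_add, Nat.cast_one]; exact le_self_add
    _ ≤ POf S Sn' K + ((m+1 : ℕ) : ℝ≥0) := le_add_self

open Classical in
/-- the global time change. -/
noncomputable def LFun : ℝ≥0 → ℝ≥0 :=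
  if GoodP S Sn' lam' K then
    glueFun (bFun S Sn' lam' K) (gFun S Sn' lam' K) (bFun_ex S Sn' lam' K)
  else id

variable {S Sn' lam' K}

lemma bFun_zero : bFun S Sn' lam' K 0 = 0 := by simp [bFun]

lemma bFun_odd {k : ℕ} (h : k ≤ K) : bFun S Sn' lam' K (2*k+1) = Uof S (2*k+1) := by
  unfold bFun; rw [if_neg (by omega), if_pos (by omega), if_pos (by omega)]

lemma bFun_even {k : ℕ} (h : k < K) :
    bFun S Sn' lam' K (2*k+2) = Uof S (2*k+1) + wOf S Sn' lam' k := by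
  unfold bFun; rw [if_neg (by omega), if_pos (by omega), if_neg (by omega)]
  have e1 : 2*k+2-1 = 2*k+1 := by omega
  have e2 : (2*k+2-2)/2 = k := by omega
  rw [e1, e2]

lemma bFun_P : bFun S Sn' lam' K (2*K+2) = POf S Sn' K := by
  unfold bFun; rw [if_neg (by omega), if_neg (by omega)]
  have h1 : ((2*K+2) - (2*K+2) : ℕ) = 0 := by omega
  rw [h1]; simp

lemma bFun_tail {i : ℕ} (h : 2*K+2 ≤ i) :
    bFun S Sn' lam' K i = POf S Sn' K + ((i - (2*K+2) : ℕ) : ℝ≥0) := by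
  unfold bFun; rw [if_neg (by omega), if_neg (by omega)]

lemma gFun_zero : gFun S Sn' lam' K 0 = aff 0 (Uof S 1) 0 (Uof Sn' 1) := by simp [gFun]

lemma gFun_odd {k : ℕ} (h : k < K) :
    gFun S Sn' lam' K (2*k+1) = fun t => Uof Sn' (2*k+1) + lam' k (t - Uof S (2*k+1)) := by
  unfold gFun; rw [if_neg (by omega), if_pos (by omega), if_pos (by omega)]
  have e1 : (2*k+1-1)/2 = k := by omega
  rw [e1]

lemma gFun_even {k : ℕ} (h : k < K) :
    gFun S Sn' lam' K (2*k+2) = aff (bFun S Sn' lam' K (2*k+2)) (bFun S Sn' lam' K (2*k+3))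
      (Uof Sn' (2*k+1) + lam' k (wOf S Sn' lam' k)) (Uof Sn' (2*k+3)) := by
  unfold gFun; rw [if_neg (by omega), if_pos (by omega), if_neg (by omega)]
  have e1 : 2*k+2-1 = 2*k+1 := by omega
  have e2 : (2*k+2-2)/2 = k := by omega
  have e3 : 2*k+2+1 = 2*k+3 := by omega
  rw [e1, e2, e3]

lemma gFun_last : gFun S Sn' lam' K (2*K+1)
    = aff (Uof S (2*K+1)) (POf S Sn' K) (Uof Sn' (2*K+1)) (POf S Sn' K) := by
  unfold gFun; rw [if_neg (by omega), if_neg (by omega), if_pos rfl]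

lemma gFun_tail {i : ℕ} (h : 2*K+1 < i) : gFun S Sn' lam' K i = id := by
  unfold gFun; rw [if_neg (by omega), if_neg (by omega), if_neg (by omega)]

lemma timeChange_zero {l : ℝ≥0 → ℝ≥0} (h : IsTimeChange l) : l 0 = 0 := by
  obtain ⟨x, hx⟩ := h.2.2 0
  have : l 0 ≤ l x := h.1.monotone (zero_le)
  rw [hx] at this
  exact le_antisymm this (zero_le)

end Construction
section Structure0

variable {S Sn' : ℕ → ℝ≥0∞} {lam' : ℕ → ℝ≥0 → ℝ≥0} {K : ℕ}

lemma Uof_coe {j : ℕ} (h : S j ≠ ⊤) : ((Uof S j : ℝ≥0) : ℝ≥0∞) = S j :=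
  ENNReal.coe_toNNReal h

lemma UofS_strict (hSfin : ∀ j, S j ≠ ⊤) (hSstrict : StrictMono S) :
    StrictMono (Uof S) := by
  intro i j hij
  have h := hSstrict hij
  rw [← Uof_coe (hSfin i), ← Uof_coe (hSfin j)] at h
  exact_mod_cast h

lemma UofSn_mono (hSnmono : Monotone Sn') {i j : ℕ} (hij : i ≤ j) (hj : Sn' j ≠ ⊤) :
    Uof Sn' i ≤ Uof Sn' j := by
  have h := hSnmono hij
  have hi : Sn' i ≠ ⊤ := fun hc => hj (top_le_iff.mp (hc ▸ h))
  rw [← Uof_coe hi, ← Uof_coe hj] at h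
  exact_mod_cast h

lemma UofS_zero (hS0 : S 0 = 0) : Uof S 0 = 0 := by simp [Uof, hS0]

lemma UofS1_pos (hSfin : ∀ j, S j ≠ ⊤) (hSstrict : StrictMono S) (hS0 : S 0 = 0) :
    0 < Uof S 1 := by
  have := UofS_strict hSfin hSstrict (show 0 < 1 by omega)
  rwa [UofS_zero hS0] at this

lemma dOfS_pos (hSfin : ∀ j, S j ≠ ⊤) (hSstrict : StrictMono S) (k : ℕ) :
    0 < dOf S k :=
  tsub_pos_of_lt (UofS_strict hSfin hSstrict (show 2*k+1 < 2*k+2 by omega))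

lemma alpha_add_d (hSfin : ∀ j, S j ≠ ⊤) (hSstrict : StrictMono S) (k : ℕ) :
    Uof S (2*k+1) + dOf S k = Uof S (2*k+2) :=
  add_tsub_cancel_of_le (UofS_strict hSfin hSstrict (show 2*k+1 < 2*k+2 by omega)).le

lemma lam_uSt (htc : ∀ k, IsTimeChange (lam' k)) (k : ℕ) :
    lam' k (uSt Sn' lam' k) = dOf Sn' k :=
  Function.invFun_eq ((htc k).2.2 (dOf Sn' k))

lemma lamw_le (htc : ∀ k, IsTimeChange (lam' k)) (k : ℕ) :
    lam' k (wOf S Sn' lam' k) ≤ dOf Sn' k := by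
  have h := (htc k).1.monotone (min_le_left (uSt Sn' lam' k) (dOf S k))
  rwa [lam_uSt htc k] at h

lemma index_cases (K i : ℕ) : i = 0 ∨ (∃ k, i = 2*k+1 ∧ k < K) ∨ i = 2*K+1 ∨
    (∃ k, i = 2*k+2 ∧ k < K) ∨ 2*K+2 ≤ i := by
  rcases Nat.even_or_odd i with ⟨k, hk⟩ | ⟨k, hk⟩
  · rcases Nat.eq_zero_or_pos i with h | h
    · exact Or.inl h
    · rcases le_or_gt (2*K+2) i with h2 | h2
      · exact Or.inr (Or.inr (Or.inr (Or.inr h2)))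
      · exact Or.inr (Or.inr (Or.inr (Or.inl ⟨k-1, by omega, by omega⟩)))
  · rcases lt_or_ge k K with h | h
    · exact Or.inr (Or.inl ⟨k, by omega, h⟩)
    · rcases le_or_gt (2*K+2) i with h2 | h2
      · exact Or.inr (Or.inr (Or.inr (Or.inr h2)))
      · exact Or.inr (Or.inr (Or.inl (by omega)))

-- primed access lemmas, convenient index forms
lemma bFun_odd' {i k : ℕ} (hik : i = 2*k+1) (h : k ≤ K) :
    bFun S Sn' lam' K i = Uof S i := by subst hik; exact bFun_odd h

lemma bFun_even' {i k : ℕ} (hik : i = 2*k+2) (h : k < K) :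
    bFun S Sn' lam' K i = Uof S (2*k+1) + wOf S Sn' lam' k := by
  subst hik; exact bFun_even h

lemma bFun_P' {i : ℕ} (hik : i = 2*K+2) : bFun S Sn' lam' K i = POf S Sn' K := by
  subst hik; exact bFun_P

lemma gFun_odd_apply' {i k : ℕ} (hik : i = 2*k+1) (h : k < K) (t : ℝ≥0) :
    gFun S Sn' lam' K i t = Uof Sn' i + lam' k (t - Uof S i) := by
  subst hik; rw [gFun_odd h]

lemma gFun_even' {i k : ℕ} (hik : i = 2*k+2) (h : k < K) :
    gFun S Sn' lam' K i = aff (bFun S Sn' lam' K i) (bFun S Sn' lam' K (i+1))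
      (Uof Sn' (2*k+1) + lam' k (wOf S Sn' lam' k)) (Uof Sn' (i+1)) := by
  subst hik
  rw [gFun_even h, show 2*k+2+1 = 2*k+3 by ring]

lemma gFun_last' {i : ℕ} (hik : i = 2*K+1) :
    gFun S Sn' lam' K i = aff (Uof S i) (POf S Sn' K) (Uof Sn' i) (POf S Sn' K) := by
  subst hik; exact gFun_last

lemma gFun_tail' {i : ℕ} (h : 2*K+1 < i) : gFun S Sn' lam' K i = id := gFun_tail h

end Structure0

section Structure

variable {S Sn' : ℕ → ℝ≥0∞} {lam' : ℕ → ℝ≥0 → ℝ≥0} {K : ℕ}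
variable (hSfin : ∀ j, S j ≠ ⊤) (hSstrict : StrictMono S) (hS0 : S 0 = 0)
  (hSnmono : Monotone Sn') (htc : ∀ k, IsTimeChange (lam' k))
  (hg : GoodP S Sn' lam' K)

include hSnmono htc hg in
lemma key2 {k : ℕ} (hk : k < K) :
    Uof Sn' (2*k+1) + lam' k (wOf S Sn' lam' k) ≤ Uof Sn' (2*k+2) := by
  calc Uof Sn' (2*k+1) + lam' k (wOf S Sn' lam' k)
      ≤ Uof Sn' (2*k+1) + dOf Sn' k := add_le_add_right (lamw_le htc k) _
    _ = Uof Sn' (2*k+2) := by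
        rw [dOf, add_tsub_cancel_of_le]
        exact UofSn_mono hSnmono (by omega) (hg.1 (2*k+2) (by omega))

include hSnmono htc hg in
lemma key2' {k : ℕ} (hk : k < K) :
    Uof Sn' (2*k+1) + lam' k (wOf S Sn' lam' k) < Uof Sn' (2*k+3) :=
  (key2 hSnmono htc hg hk).trans_lt (hg.2.1 k hk)

include hSfin hSstrict in
lemma b_even_le {k : ℕ} (hk : k < K) :
    bFun S Sn' lam' K (2*k+2) ≤ Uof S (2*k+2) := by
  rw [bFun_even' rfl hk]
  calc Uof S (2*k+1) + wOf S Sn' lam' k ≤ Uof S (2*k+1) + dOf S k :=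
        add_le_add_right (min_le_right _ _) _
    _ = Uof S (2*k+2) := alpha_add_d hSfin hSstrict k

include hSfin hSstrict in
lemma b_even_lt_odd {i k : ℕ} (hik : i = 2*k+2) (hk : k < K) :
    bFun S Sn' lam' K i < bFun S Sn' lam' K (i+1) := by
  subst hik
  rw [bFun_odd' (i := 2*k+2+1) (k := k+1) (by ring) (by omega)]
  exact (b_even_le hSfin hSstrict hk).trans_lt
    (UofS_strict hSfin hSstrict (show 2*k+2 < 2*k+2+1 by omega))

lemma hx_last : Uof S (2*K+1) < POf S Sn' K :=
  (le_max_left _ _).trans_lt (lt_add_one _)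

lemma hy_last : Uof Sn' (2*K+1) ≤ POf S Sn' K :=
  (le_max_right _ _).trans le_self_add

lemma hy_last' : Uof Sn' (2*K+1) < POf S Sn' K :=
  (le_max_right _ _).trans_lt (lt_add_one _)

include hSfin hSstrict hS0 in
lemma bFun_mono : Monotone (bFun S Sn' lam' K) := by
  apply monotone_nat_of_le_succ
  intro i
  rcases index_cases K i with rfl | ⟨k, rfl, hk⟩ | rfl | ⟨k, rfl, hk⟩ | hi
  · rw [bFun_zero]; exact zero_le
  · rw [bFun_odd' rfl hk.le, bFun_even' (i := 2*k+1+1) (k := k) (by ring) hk]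
    exact le_self_add
  · rw [bFun_odd' (k := K) rfl le_rfl, bFun_P' (i := 2*K+1+1) (by ring)]
    exact (hx_last (S := S) (Sn' := Sn') (K := K)).le
  · rw [bFun_even' rfl hk]
    have h2 : bFun S Sn' lam' K (2*k+2) ≤ Uof S (2*k+2) := b_even_le hSfin hSstrict hk
    rw [bFun_even' rfl hk] at h2
    refine h2.trans ?_
    rw [bFun_odd' (i := 2*k+2+1) (k := k+1) (by ring) (by omega)]
    exact (UofS_strict hSfin hSstrict (show 2*k+2 < 2*k+2+1 by omega)).le
  · rw [bFun_tail hi, bFun_tail (by omega)]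
    exact add_le_add_right (Nat.cast_le.mpr (by omega)) _

include hSfin hSstrict hS0 hSnmono htc hg in
lemma gFun_glue : ∀ i, gFun S Sn' lam' K i (bFun S Sn' lam' K (i+1))
    = gFun S Sn' lam' K (i+1) (bFun S Sn' lam' K (i+1)) := by
  intro i
  rcases index_cases K i with rfl | ⟨k, rfl, hk⟩ | rfl | ⟨k, rfl, hk⟩ | hi
  · -- i = 0
    have hb1 : bFun S Sn' lam' K (0+1) = Uof S (0+1) :=
      bFun_odd' (k := 0) (by omega) (by omega)
    rw [hb1, gFun_zero]
    have hg1 : Uof S (0+1) = Uof S 1 := rfl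
    rw [hg1, aff_right (UofS1_pos hSfin hSstrict hS0) (zero_le)]
    rcases Nat.eq_zero_or_pos K with rfl | hK
    · rw [gFun_last' (i := 0+1) (by omega), aff_left]
    · rw [gFun_odd_apply' (i := 0+1) (k := 0) (by omega) hK, tsub_self,
        timeChange_zero (htc 0), add_zero]
  · -- i = 2k+1, k < K
    rw [bFun_even' (i := 2*k+1+1) (k := k) (by ring) hk,
      gFun_odd_apply' (k := k) rfl hk,
      add_tsub_cancel_left, gFun_even' (i := 2*k+1+1) (k := k) (by ring) hk,
      bFun_even' (i := 2*k+1+1) (k := k) (by ring) hk, aff_left]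
  · -- i = 2K+1
    rw [bFun_P' (i := 2*K+1+1) (by ring), gFun_last' rfl,
      aff_right hx_last hy_last, gFun_tail' (by omega)]
    rfl
  · -- i = 2k+2, k < K
    have hb3 : bFun S Sn' lam' K (2*k+2+1) = Uof S (2*k+2+1) :=
      bFun_odd' (k := k+1) (by ring) (by omega)
    have hy2 : Uof Sn' (2*k+1) + lam' k (wOf S Sn' lam' k) ≤ Uof Sn' (2*k+2+1) := by
      rw [show (2*k+2+1 : ℕ) = 2*k+3 by ring]
      exact (key2' hSnmono htc hg hk).le
    have hx2 : bFun S Sn' lam' K (2*k+2) < Uof S (2*k+2+1) := by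
      have h3 := b_even_lt_odd (Sn' := Sn') (lam' := lam') hSfin hSstrict (i := 2*k+2) rfl hk
      rwa [hb3] at h3
    rw [gFun_even' rfl hk, hb3, aff_right hx2 hy2]
    rcases lt_or_ge (k+1) K with h2 | h2
    · rw [gFun_odd_apply' (i := 2*k+2+1) (k := k+1) (by ring) h2, tsub_self,
        timeChange_zero (htc (k+1)), add_zero]
    · rw [gFun_last' (i := 2*k+2+1) (by omega), aff_left]
  · rw [gFun_tail' (by omega), gFun_tail' (by omega)]

end Structure

section Structure2

variable {S Sn' : ℕ → ℝ≥0∞} {lam' : ℕ → ℝ≥0 → ℝ≥0} {K : ℕ}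
variable (hSfin : ∀ j, S j ≠ ⊤) (hSstrict : StrictMono S) (hS0 : S 0 = 0)
  (hSnmono : Monotone Sn') (htc : ∀ k, IsTimeChange (lam' k))
  (hg : GoodP S Sn' lam' K)

include hSfin hSstrict hS0 hSnmono htc hg in
lemma gFun_smono : ∀ i, StrictMonoOn (gFun S Sn' lam' K i)
    (Icc (bFun S Sn' lam' K i) (bFun S Sn' lam' K (i+1))) := by
  intro i
  rcases index_cases K i with rfl | ⟨k, rfl, hk⟩ | rfl | ⟨k, rfl, hk⟩ | hi
  · rw [gFun_zero]
    exact (aff_strictMonoOn (UofS1_pos hSfin hSstrict hS0) hg.2.2.2.2).mono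
      (fun x _ => Set.mem_Ici.mpr zero_le)
  · intro s hs t ht hst
    rw [gFun_odd_apply' rfl hk, gFun_odd_apply' rfl hk]
    rw [bFun_odd' rfl hk.le] at hs
    exact add_lt_add_right ((htc k).1 (tsub_lt_tsub_right_of_le hs.1 hst)) _
  · rw [gFun_last' rfl]
    refine (aff_strictMonoOn hx_last (hy_last' (S := S))).mono ?_
    intro x hx
    rw [bFun_odd' (k := K) rfl le_rfl] at hx
    exact hx.1
  · rw [gFun_even' rfl hk]
    exact (aff_strictMonoOn (b_even_lt_odd hSfin hSstrict rfl hk)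
      (by
        refine (key2 hSnmono htc hg hk).trans_lt ?_
        refine (hg.2.1 k hk).trans_le ?_
        rw [show (2*k+3 : ℕ) = 2*k+2+1 by ring])).mono (fun x hx => hx.1)
  · rw [gFun_tail' (by omega)]
    exact strictMono_id.strictMonoOn _

include hSfin hSstrict hS0 hSnmono htc hg in
lemma gFun_surj : ∀ i, SurjOn (gFun S Sn' lam' K i)
    (Icc (bFun S Sn' lam' K i) (bFun S Sn' lam' K (i+1)))
    (Icc (gFun S Sn' lam' K i (bFun S Sn' lam' K i))
      (gFun S Sn' lam' K i (bFun S Sn' lam' K (i+1)))) := by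
  intro i
  rcases index_cases K i with rfl | ⟨k, rfl, hk⟩ | rfl | ⟨k, rfl, hk⟩ | hi
  · rw [gFun_zero, bFun_zero, bFun_odd' (i := 0+1) (k := 0) (by omega) (by omega)]
    have hR : aff 0 (Uof S 1) 0 (Uof Sn' 1) (Uof S (0+1)) = Uof Sn' 1 :=
      aff_right (UofS1_pos hSfin hSstrict hS0) (zero_le)
    rw [aff_left, hR]
    exact aff_surjOn (UofS1_pos hSfin hSstrict hS0) (zero_le)
  · -- odd piece
    have hb1 : bFun S Sn' lam' K (2*k+1) = Uof S (2*k+1) := bFun_odd' rfl hk.le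
    have hb2 : bFun S Sn' lam' K (2*k+1+1) = Uof S (2*k+1) + wOf S Sn' lam' k :=
      bFun_even' (by ring) hk
    have hgl : gFun S Sn' lam' K (2*k+1) (bFun S Sn' lam' K (2*k+1))
        = Uof Sn' (2*k+1) := by
      rw [gFun_odd_apply' rfl hk, hb1, tsub_self, timeChange_zero (htc k), add_zero]
    have hgr : gFun S Sn' lam' K (2*k+1) (bFun S Sn' lam' K (2*k+1+1))
        = Uof Sn' (2*k+1) + lam' k (wOf S Sn' lam' k) := by
      rw [gFun_odd_apply' rfl hk, hb2, add_tsub_cancel_left]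
    rw [hgl, hgr, hb1, hb2]
    intro y hy
    obtain ⟨x, hx⟩ := (htc k).2.2 (y - Uof Sn' (2*k+1))
    have hxw : x ≤ wOf S Sn' lam' k := by
      refine ((htc k).1.le_iff_le).mp ?_
      rw [hx]
      exact tsub_le_iff_left.mpr hy.2
    refine ⟨Uof S (2*k+1) + x, ⟨le_self_add, add_le_add_right hxw _⟩, ?_⟩
    rw [gFun_odd_apply' rfl hk, add_tsub_cancel_left, hx,
      add_tsub_cancel_of_le hy.1]
  · -- last piece
    have hb1 : bFun S Sn' lam' K (2*K+1) = Uof S (2*K+1) :=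
      bFun_odd' (k := K) rfl le_rfl
    have hb2 : bFun S Sn' lam' K (2*K+1+1) = POf S Sn' K := bFun_P' (by ring)
    rw [gFun_last' rfl, hb1, hb2, aff_left, aff_right hx_last hy_last]
    exact aff_surjOn hx_last hy_last
  · -- even piece
    have hx2 := b_even_lt_odd (Sn' := Sn') (lam' := lam') hSfin hSstrict (i := 2*k+2) rfl hk
    have hy2 : Uof Sn' (2*k+1) + lam' k (wOf S Sn' lam' k) ≤ Uof Sn' (2*k+2+1) := by
      rw [show (2*k+2+1 : ℕ) = 2*k+3 by ring]
      exact (key2' hSnmono htc hg hk).le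
    rw [gFun_even' rfl hk, aff_left, aff_right hx2 hy2]
    exact aff_surjOn hx2 hy2
  · rw [gFun_tail' (by omega)]
    intro y hy
    exact ⟨y, hy, rfl⟩

lemma gFun_vex : ∀ y : ℝ≥0, ∃ i, y ≤ gFun S Sn' lam' K i (bFun S Sn' lam' K (i+1)) := by
  intro y
  obtain ⟨m, hm⟩ := exists_nat_gt y
  refine ⟨2*K+2+m, ?_⟩
  rw [gFun_tail' (by omega), bFun_tail (by omega)]
  have h1 : ((2*K+2+m+1) - (2*K+2) : ℕ) = m+1 := by omega
  rw [h1]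
  calc y ≤ (m : ℝ≥0) := hm.le
    _ ≤ ((m+1 : ℕ) : ℝ≥0) := by rw [Nat.cast_add, Nat.cast_one]; exact le_self_add
    _ ≤ POf S Sn' K + ((m+1 : ℕ) : ℝ≥0) := le_add_self

lemma gFun_00 : gFun S Sn' lam' K 0 0 = 0 := by rw [gFun_zero, aff_left]

include hSfin hSstrict hS0 hSnmono htc in
lemma LFun_timeChange : IsTimeChange (LFun S Sn' lam' K) := by
  unfold LFun
  split_ifs with h
  · have hsm := glue_strictMono (bFun_ex S Sn' lam' K) bFun_zero
      (bFun_mono hSfin hSstrict hS0) (gFun_glue hSfin hSstrict hS0 hSnmono htc h)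
      (gFun_smono hSfin hSstrict hS0 hSnmono htc h)
    exact ⟨hsm, hsm.injective,
      glue_surjective (bFun_ex S Sn' lam' K) bFun_zero
        (bFun_mono hSfin hSstrict hS0) (gFun_glue hSfin hSstrict hS0 hSnmono htc h)
        (gFun_smono hSfin hSstrict hS0 hSnmono htc h)
        (gFun_surj hSfin hSstrict hS0 hSnmono htc h) gFun_00 gFun_vex⟩
  · exact ⟨strictMono_id, Function.bijective_id⟩

include hSfin hSstrict hS0 hSnmono htc hg in
lemma LFun_eq {i : ℕ} {s : ℝ≥0} (h1 : bFun S Sn' lam' K i ≤ s)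
    (h2 : s ≤ bFun S Sn' lam' K (i+1)) :
    LFun S Sn' lam' K s = gFun S Sn' lam' K i s := by
  unfold LFun
  rw [if_pos hg]
  exact glue_eq (bFun_ex S Sn' lam' K) bFun_zero (bFun_mono hSfin hSstrict hS0)
    (gFun_glue hSfin hSstrict hS0 hSnmono htc hg) h1 h2

end Structure2

section Dev

variable {S Sn' : ℕ → ℝ≥0∞} {lam' : ℕ → ℝ≥0 → ℝ≥0} {K : ℕ}
variable (hSfin : ∀ j, S j ≠ ⊤) (hSstrict : StrictMono S) (hS0 : S 0 = 0)
  (hSnmono : Monotone Sn') (htc : ∀ k, IsTimeChange (lam' k))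
  (hg : GoodP S Sn' lam' K)

include hSfin hSstrict hS0 hSnmono htc hg in
lemma LFun_dev {c : ℝ≥0∞}
    (hU : ∀ j, j ≤ 2*K+1 → edist (Uof Sn' j) (Uof S j) ≤ c)
    (hlam : ∀ k, k < K → ∀ s : ℝ≥0, edist (lam' k s) s ≤ c) :
    ∀ s : ℝ≥0, edist (LFun S Sn' lam' K s) s ≤ c + c := by
  intro s
  unfold LFun
  rw [if_pos hg]
  refine glue_dev (bFun_ex S Sn' lam' K) bFun_zero ?_ s
  intro i t ht
  rcases index_cases K i with rfl | ⟨k, rfl, hk⟩ | rfl | ⟨k, rfl, hk⟩ | hi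
  · rw [gFun_zero]
    rw [bFun_zero, bFun_odd' (i := 0+1) (k := 0) (by omega) (by omega)] at ht
    refine aff_dev (UofS1_pos hSfin hSstrict hS0) (zero_le) ⟨ht.1, ht.2⟩ ?_ ?_
    · rw [edist_self]; exact zero_le
    · exact (hU 1 (by omega)).trans le_self_add
  · rw [gFun_odd_apply' rfl hk]
    rw [bFun_odd' rfl hk.le, bFun_even' (i := 2*k+1+1) (k := k) (by ring) hk] at ht
    have hts : Uof S (2*k+1) + (t - Uof S (2*k+1)) = t := add_tsub_cancel_of_le ht.1
    calc edist (Uof Sn' (2*k+1) + lam' k (t - Uof S (2*k+1))) t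
        = edist (Uof Sn' (2*k+1) + lam' k (t - Uof S (2*k+1)))
            (Uof S (2*k+1) + (t - Uof S (2*k+1))) := by rw [hts]
      _ ≤ edist (Uof Sn' (2*k+1)) (Uof S (2*k+1))
            + edist (lam' k (t - Uof S (2*k+1))) (t - Uof S (2*k+1)) :=
          edist_add_le_nn _ _ _ _
      _ ≤ c + c := add_le_add (hU _ (by omega)) (hlam k hk _)
  · rw [gFun_last' rfl]
    rw [bFun_odd' (k := K) rfl le_rfl, bFun_P' (i := 2*K+1+1) (by ring)] at ht
    refine aff_dev hx_last hy_last ht ((hU _ (by omega)).trans le_self_add) ?_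
    rw [edist_self]; exact zero_le
  · rw [gFun_even' rfl hk]
    have hx2 := b_even_lt_odd (Sn' := Sn') (lam' := lam') hSfin hSstrict
      (i := 2*k+2) rfl hk
    have hy2 : Uof Sn' (2*k+1) + lam' k (wOf S Sn' lam' k) ≤ Uof Sn' (2*k+2+1) := by
      rw [show (2*k+2+1 : ℕ) = 2*k+3 by ring]
      exact (key2' hSnmono htc hg hk).le
    refine aff_dev hx2 hy2 ht ?_ ?_
    · rw [bFun_even' rfl hk]
      calc edist (Uof Sn' (2*k+1) + lam' k (wOf S Sn' lam' k))
            (Uof S (2*k+1) + wOf S Sn' lam' k)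
          ≤ edist (Uof Sn' (2*k+1)) (Uof S (2*k+1))
            + edist (lam' k (wOf S Sn' lam' k)) (wOf S Sn' lam' k) :=
            edist_add_le_nn _ _ _ _
        _ ≤ c + c := add_le_add (hU _ (by omega)) (hlam k hk _)
    · rw [bFun_odd' (i := 2*k+2+1) (k := k+1) (by ring) (by omega)]
      exact (hU _ (by omega)).trans le_self_add
  · rw [gFun_tail' (by omega)]
    simp only [id_eq, edist_self]
    exact zero_le

end Dev

section Ops

variable {V : Type*} [MetricSpace V] {a : V}

lemma subdiv_zero {S : ℕ → ℝ≥0∞} (h : IsSubdivision S) : S 0 = 0 := by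
  obtain ⟨k, hk1, hk2⟩ := h.2 0
  have hk0 : S k = 0 := le_antisymm (by simpa using hk1) (zero_le)
  exact le_antisymm ((h.1 (Nat.zero_le k)).trans hk0.le) (zero_le)

lemma phi_live {Sn' : ℕ → ℝ≥0∞} {f : ℝ≥0 → V} {x : ℝ≥0} {j : ℕ}
    (h1 : Sn' (2*j+1) ≤ (x:ℝ≥0∞)) (h2 : (x:ℝ≥0∞) < Sn' (2*j+2)) :
    PhiSub a Sn' f x = f x := by
  simp only [PhiSub]
  rw [if_pos ⟨j, h1, h2⟩]

lemma phi_dead_low {Sn' : ℕ → ℝ≥0∞} {f : ℝ≥0 → V} {x : ℝ≥0}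
    (hmono : Monotone Sn') (h : (x:ℝ≥0∞) < Sn' 1) :
    PhiSub a Sn' f x = a := by
  simp only [PhiSub]
  rw [if_neg]
  rintro ⟨j, hj1, hj2⟩
  exact absurd ((hmono (by omega : 1 ≤ 2*j+1)).trans hj1) (not_le.mpr h)

lemma phi_dead_mid {Sn' : ℕ → ℝ≥0∞} {f : ℝ≥0 → V} {x : ℝ≥0} {k : ℕ}
    (hmono : Monotone Sn') (h1 : Sn' (2*k+2) ≤ (x:ℝ≥0∞)) (h2 : (x:ℝ≥0∞) < Sn' (2*k+3)) :
    PhiSub a Sn' f x = a := by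
  simp only [PhiSub]
  rw [if_neg]
  rintro ⟨j, hj1, hj2⟩
  rcases le_or_gt j k with h | h
  · exact absurd ((h1.trans_lt hj2).trans_le (hmono (by omega : 2*j+2 ≤ 2*k+2)))
      (lt_irrefl _)
  · exact absurd ((h2.trans_le (hmono (by omega : 2*k+3 ≤ 2*j+1))).trans_le hj1)
      (lt_irrefl _)

lemma psi_eq {S : ℕ → ℝ≥0∞} {Z : ℕ → ℝ≥0 → V} (hSmono : Monotone S)
    {k : ℕ} {s : ℝ≥0} (h1 : S (2*k+1) ≤ (s:ℝ≥0∞)) (h2 : (s:ℝ≥0∞) < S (2*k+2)) :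
    PsiSub a S Z s = Z (k+1) (s - (S (2*k+1)).toNNReal) := by
  have hex : ∃ c, S (2*c+1) ≤ (s:ℝ≥0∞) ∧ (s:ℝ≥0∞) < S (2*c+2) := ⟨k, h1, h2⟩
  have hch : hex.choose = k := by
    obtain ⟨hc1, hc2⟩ := hex.choose_spec
    rcases Nat.lt_trichotomy hex.choose k with h | h | h
    · exact absurd (hc2.trans_le ((hSmono (by omega : 2*hex.choose+2 ≤ 2*k+1)).trans h1))
        (lt_irrefl _)
    · exact h
    · exact absurd (h2.trans_le ((hSmono (by omega : 2*k+2 ≤ 2*hex.choose+1)).trans hc1))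
        (lt_irrefl _)
  simp only [PsiSub]
  rw [dif_pos hex, hch]

lemma psi_dead {S : ℕ → ℝ≥0∞} {Z : ℕ → ℝ≥0 → V} (hSmono : Monotone S)
    {k : ℕ} {s : ℝ≥0} (h1 : S (2*k) ≤ (s:ℝ≥0∞)) (h2 : (s:ℝ≥0∞) < S (2*k+1)) :
    PsiSub a S Z s = a := by
  simp only [PsiSub]
  rw [dif_neg]
  rintro ⟨c, hc1, hc2⟩
  rcases lt_or_ge c k with h | h
  · exact absurd ((h1.trans_lt hc2).trans_le (hSmono (by omega : 2*c+2 ≤ 2*k)))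
      (lt_irrefl _)
  · exact absurd ((h2.trans_le (hSmono (by omega : 2*k+1 ≤ 2*c+1))).trans_le hc1)
      (lt_irrefl _)

lemma esub_lt {Sn' : ℕ → ℝ≥0∞} {f : ℝ≥0 → V} {v : ℝ≥0} {k : ℕ}
    (h : (v:ℝ≥0∞) < Sn' (2*k+2) - Sn' (2*k+1)) :
    ESub a Sn' f (k+1) v = f (v + (Sn' (2*k+1)).toNNReal) := by
  simp only [ESub]
  rw [show 2*(k+1)-1 = 2*k+1 by omega, show 2*(k+1) = 2*k+2 by ring, if_pos h]

lemma esub_ge {Sn' : ℕ → ℝ≥0∞} {f : ℝ≥0 → V} {v : ℝ≥0} {k : ℕ}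
    (h : ¬ ((v:ℝ≥0∞) < Sn' (2*k+2) - Sn' (2*k+1))) :
    ESub a Sn' f (k+1) v = a := by
  simp only [ESub]
  rw [show 2*(k+1)-1 = 2*k+1 by omega, show 2*(k+1) = 2*k+2 by ring, if_neg h]

lemma dOf_coe {Sn' : ℕ → ℝ≥0∞} {k : ℕ} (h1 : Sn' (2*k+1) ≠ ⊤) (h2 : Sn' (2*k+2) ≠ ⊤) :
    ((dOf Sn' k : ℝ≥0) : ℝ≥0∞) = Sn' (2*k+2) - Sn' (2*k+1) := by
  rw [dOf, ENNReal.coe_sub, Uof_coe h2, Uof_coe h1]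

lemma Uof_def (S : ℕ → ℝ≥0∞) (j : ℕ) : (S j).toNNReal = Uof S j := rfl

end Ops

section MainEst

open Classical in
lemma main_est {V : Type*} [MetricSpace V] {a : V} {S Sn' : ℕ → ℝ≥0∞}
    {lam' : ℕ → ℝ≥0 → ℝ≥0} {K J : ℕ} {fn : ℝ≥0 → V} {ζ : ℕ → ℝ≥0 → V}
    {mK : ℕ → ℝ≥0} {ε2 : ℝ≥0∞}
    (hSfin : ∀ j, S j ≠ ⊤) (hSstrict : StrictMono S) (hS0 : S 0 = 0)
    (hSnmono : Monotone Sn') (htc : ∀ k, IsTimeChange (lam' k))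
    (hg : GoodP S Sn' lam' K) (hJK : J < K)
    (hmK : ∀ k, k ≤ J → dOf S k + 1 ≤ mK k)
    (hES : ∀ k, k ≤ J → ∀ u : ℝ≥0, u ≤ mK k →
      edist (ESub a Sn' fn (k+1) (lam' k u)) (ζ (k+1) u) ≤ ε2)
    (hzeta : ∀ k, k ≤ J → ∀ v : ℝ≥0, dOf S k ≤ v → ζ (k+1) v = a)
    {s : ℝ≥0} (hs : s ≤ Uof S (2*J+1)) :
    edist (PhiSub a Sn' fn (LFun S Sn' lam' K s)) (PsiSub a S ζ s) ≤ ε2 + ε2 := by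
  have hfin : ∀ j, j ≤ 2*K+1 → Sn' j ≠ ⊤ := hg.1
  rcases lt_or_ge s (Uof S 1) with hcase | hcase
  · -- initial dead zone
    have hL : LFun S Sn' lam' K s = aff 0 (Uof S 1) 0 (Uof Sn' 1) s := by
      rw [LFun_eq hSfin hSstrict hS0 hSnmono htc hg (i := 0)
        (by rw [bFun_zero]; exact zero_le)
        (by rw [bFun_odd' (i := 0+1) (k := 0) (by omega) (by omega)]; exact hcase.le),
        gFun_zero]
    have hxlt : aff 0 (Uof S 1) 0 (Uof Sn' 1) s < Uof Sn' 1 := by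
      have h2 := aff_strictMonoOn (UofS1_pos hSfin hSstrict hS0) hg.2.2.2.2
        (Set.mem_Ici.mpr (zero_le)) (Set.mem_Ici.mpr (zero_le)) hcase
      rwa [aff_right (UofS1_pos hSfin hSstrict hS0) (zero_le)] at h2
    rw [hL, phi_dead_low hSnmono (by
        rw [← Uof_coe (hfin 1 (by omega))]
        exact_mod_cast hxlt),
      psi_dead hSstrict.monotone (k := 0)
        (by rw [show (2*0 : ℕ) = 0 by norm_num, hS0]; exact zero_le)
        (by
          rw [show (2*0+1 : ℕ) = 1 by norm_num, ← Uof_coe (hSfin 1)]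
          exact_mod_cast hcase),
      edist_self]
    exact zero_le
  · -- main zone
    set P : ℕ → Prop := fun k => Uof S (2*k+1) ≤ s with hP
    have hP0 : P 0 := by
      show Uof S (2*0+1) ≤ s
      rw [show (2*0+1 : ℕ) = 1 by norm_num]
      exact hcase
    set k := Nat.findGreatest P J with hkdef
    have hk1 : Uof S (2*k+1) ≤ s := Nat.findGreatest_spec (Nat.zero_le J) hP0
    have hkJ : k ≤ J := Nat.findGreatest_le J
    have hkK : k < K := lt_of_le_of_lt hkJ hJK
    have hk2 : s < Uof S (2*k+3) := by
      rcases lt_or_ge k J with h | h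
      · have hng : ¬ P (k+1) :=
          Nat.findGreatest_is_greatest (lt_add_one k) (by omega)
        have : ¬ (Uof S (2*(k+1)+1) ≤ s) := hng
        rw [show 2*(k+1)+1 = 2*k+3 by ring] at this
        exact not_le.mp this
      · have hkJ' : k = J := le_antisymm hkJ h
        rw [hkJ']
        exact lt_of_le_of_lt (hkJ' ▸ hs)
          (UofS_strict hSfin hSstrict (show 2*J+1 < 2*J+3 by omega))
    have hfin1 : Sn' (2*k+1) ≠ ⊤ := hfin _ (by omega)
    have hfin2 : Sn' (2*k+2) ≠ ⊤ := hfin _ (by omega)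
    have hfin3 : Sn' (2*k+3) ≠ ⊤ := hfin _ (by omega)
    have hd1mK : dOf S k + 1 ≤ mK k := hmK k hkJ
    have hsplit : Uof S (2*k+1) + (s - Uof S (2*k+1)) = s := add_tsub_cancel_of_le hk1
    rcases lt_or_ge (s - Uof S (2*k+1)) (wOf S Sn' lam' k) with hB | hB
    · -- on the λ-piece
      have hbl : bFun S Sn' lam' K (2*k+1) ≤ s := by
        rw [bFun_odd' rfl hkK.le]; exact hk1
      have hbr : s ≤ bFun S Sn' lam' K (2*k+1+1) := by
        rw [bFun_even' (i := 2*k+1+1) (k := k) (by ring) hkK]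
        calc s = Uof S (2*k+1) + (s - Uof S (2*k+1)) := hsplit.symm
          _ ≤ _ := add_le_add_right hB.le _
      have hL : LFun S Sn' lam' K s
          = Uof Sn' (2*k+1) + lam' k (s - Uof S (2*k+1)) := by
        rw [LFun_eq hSfin hSstrict hS0 hSnmono htc hg hbl hbr,
          gFun_odd_apply' rfl hkK]
      have hlamlt : lam' k (s - Uof S (2*k+1)) < dOf Sn' k := by
        have h5 : s - Uof S (2*k+1) < uSt Sn' lam' k := hB.trans_le (min_le_left _ _)
        have h6 := (htc k).1 h5
        rwa [lam_uSt htc k] at h6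
      have hUlt : Uof Sn' (2*k+1) + lam' k (s - Uof S (2*k+1)) < Uof Sn' (2*k+2) := by
        refine lt_of_lt_of_le (add_lt_add_right hlamlt _) ?_
        rw [dOf, add_tsub_cancel_of_le (UofSn_mono hSnmono (by omega) hfin2)]
      have hPhi : PhiSub a Sn' fn (LFun S Sn' lam' K s)
          = ESub a Sn' fn (k+1) (lam' k (s - Uof S (2*k+1))) := by
        rw [hL, phi_live (j := k)
          (by rw [← Uof_coe hfin1]; exact_mod_cast le_self_add)
          (by rw [← Uof_coe hfin2]; exact_mod_cast hUlt),
          esub_lt (by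
            rw [← dOf_coe hfin1 hfin2]
            exact_mod_cast hlamlt)]
        rw [Uof_def, add_comm]
      have hPsi : PsiSub a S ζ s = ζ (k+1) (s - Uof S (2*k+1)) := by
        rw [psi_eq hSstrict.monotone (k := k)
          (by rw [← Uof_coe (hSfin _)]; exact_mod_cast hk1)
          (by
            rw [← Uof_coe (hSfin (2*k+2))]
            refine ENNReal.coe_lt_coe.mpr ?_
            calc s = Uof S (2*k+1) + (s - Uof S (2*k+1)) := hsplit.symm
              _ < Uof S (2*k+1) + dOf S k :=
                  add_lt_add_right (hB.trans_le (min_le_right _ _)) _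
              _ = Uof S (2*k+2) := alpha_add_d hSfin hSstrict k),
          Uof_def]
      rw [hPhi, hPsi]
      refine (hES k hkJ _ ?_).trans le_self_add
      exact ((hB.trans_le (min_le_right _ _)).le.trans le_self_add).trans hd1mK
    · -- on the affine piece
      have hbl : bFun S Sn' lam' K (2*k+2) ≤ s := by
        rw [bFun_even' rfl hkK]
        calc Uof S (2*k+1) + wOf S Sn' lam' k
            ≤ Uof S (2*k+1) + (s - Uof S (2*k+1)) := add_le_add_right hB _
          _ = s := hsplit
      have hbodd : bFun S Sn' lam' K (2*k+2+1) = Uof S (2*k+2+1) :=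
        bFun_odd' (i := 2*k+2+1) (k := k+1) (by ring) (by omega)
      have hk2' : s < Uof S (2*k+2+1) := by
        rw [show (2*k+2+1 : ℕ) = 2*k+3 by ring]; exact hk2
      have hbr : s ≤ bFun S Sn' lam' K (2*k+2+1) := by
        rw [hbodd]; exact hk2'.le
      set x := aff (bFun S Sn' lam' K (2*k+2)) (bFun S Sn' lam' K (2*k+2+1))
        (Uof Sn' (2*k+1) + lam' k (wOf S Sn' lam' k)) (Uof Sn' (2*k+2+1)) s with hxdef
      have hL : LFun S Sn' lam' K s = x := by
        rw [LFun_eq hSfin hSstrict hS0 hSnmono htc hg hbl hbr, gFun_even' rfl hkK]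
      have hxy1 : Uof Sn' (2*k+1) + lam' k (wOf S Sn' lam' k) ≤ x := le_self_add
      have hx2 := b_even_lt_odd (Sn' := Sn') (lam' := lam') hSfin hSstrict
        (i := 2*k+2) rfl hkK
      have hy2 : Uof Sn' (2*k+1) + lam' k (wOf S Sn' lam' k) ≤ Uof Sn' (2*k+2+1) := by
        rw [show (2*k+2+1 : ℕ) = 2*k+3 by ring]
        exact (key2' hSnmono htc hg hkK).le
      have hxlt3 : x < Uof Sn' (2*k+2+1) := by
        have hslt : s < bFun S Sn' lam' K (2*k+2+1) := by rw [hbodd]; exact hk2'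
        have h7 := aff_strictMonoOn hx2 (hy2.lt_of_ne ?hne)
          (Set.mem_Ici.mpr hbl) (Set.mem_Ici.mpr (le_of_lt (hbl.trans_lt hslt))) hslt
        case hne =>
          rw [show (2*k+2+1 : ℕ) = 2*k+3 by ring]
          exact (key2' hSnmono htc hg hkK).ne
        rwa [aff_right hx2 hy2] at h7
      have hPhiBound : edist (PhiSub a Sn' fn x) a ≤ ε2 := by
        rcases lt_or_ge x (Uof Sn' (2*k+2)) with hxc | hxc
        · have hUx : Uof Sn' (2*k+1) ≤ x := le_self_add.trans hxy1
          have hxU : x - Uof Sn' (2*k+1) < dOf Sn' k :=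
            tsub_lt_tsub_right_of_le hUx hxc
          obtain ⟨q, hq⟩ := (htc k).2.2 (x - Uof Sn' (2*k+1))
          have hqU : q < uSt Sn' lam' k := by
            refine ((htc k).1.lt_iff_lt).mp ?_
            rw [hq, lam_uSt htc k]
            exact hxU
          have hqw : wOf S Sn' lam' k ≤ q := by
            refine ((htc k).1.le_iff_le).mp ?_
            rw [hq]
            exact le_tsub_of_add_le_left hxy1
          have hdq : dOf S k ≤ q := by
            by_contra hcon
            push_neg at hcon
            exact absurd (lt_min hqU hcon) (not_lt.mpr hqw)
          have hqm : q ≤ mK k := (hqU.le.trans (hg.2.2.1 k hkK)).trans hd1mK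
          have hEq := hES k hkJ q hqm
          rw [hzeta k hkJ q hdq] at hEq
          have hEsub : ESub a Sn' fn (k+1) (lam' k q) = fn x := by
            rw [esub_lt (by
              rw [hq, ← dOf_coe hfin1 hfin2]
              exact_mod_cast hxU), hq, Uof_def, tsub_add_cancel_of_le hUx]
          rw [phi_live (j := k)
            (by rw [← Uof_coe hfin1]; exact_mod_cast hUx)
            (by rw [← Uof_coe hfin2]; exact_mod_cast hxc), ← hEsub]
          exact hEq
        · rw [phi_dead_mid hSnmono
            (by rw [← Uof_coe hfin2]; exact_mod_cast hxc)
            (by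
              rw [← Uof_coe hfin3]
              refine ENNReal.coe_lt_coe.mpr ?_
              rwa [show (2*k+3 : ℕ) = 2*k+2+1 by ring]), edist_self]
          exact zero_le
      have hPsiBound : edist (PsiSub a S ζ s) a ≤ ε2 := by
        rcases lt_or_ge (s - Uof S (2*k+1)) (dOf S k) with hud | hud
        · have hPsi : PsiSub a S ζ s = ζ (k+1) (s - Uof S (2*k+1)) := by
            rw [psi_eq hSstrict.monotone (k := k)
              (by rw [← Uof_coe (hSfin _)]; exact_mod_cast hk1)
              (by
                rw [← Uof_coe (hSfin (2*k+2))]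
                refine ENNReal.coe_lt_coe.mpr ?_
                calc s = Uof S (2*k+1) + (s - Uof S (2*k+1)) := hsplit.symm
                  _ < Uof S (2*k+1) + dOf S k := add_lt_add_right hud _
                  _ = Uof S (2*k+2) := alpha_add_d hSfin hSstrict k),
              Uof_def]
          have huSt : uSt Sn' lam' k ≤ s - Uof S (2*k+1) := by
            by_contra hcon
            push_neg at hcon
            exact absurd (lt_min hcon hud) (not_lt.mpr hB)
          have hlamge : dOf Sn' k ≤ lam' k (s - Uof S (2*k+1)) := by
            have h8 := (htc k).1.monotone huSt
            rwa [lam_uSt htc k] at h8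
          have hEq := hES k hkJ (s - Uof S (2*k+1))
            ((hud.le.trans le_self_add).trans hd1mK)
          rw [esub_ge (by
            rw [← dOf_coe hfin1 hfin2]
            exact not_lt.mpr (by exact_mod_cast hlamge))] at hEq
          rw [hPsi, edist_comm]
          exact hEq
        · have hPsi : PsiSub a S ζ s = a := by
            refine psi_dead hSstrict.monotone (k := k+1) ?_ ?_
            · rw [show 2*(k+1) = 2*k+2 by ring, ← Uof_coe (hSfin (2*k+2))]
              refine ENNReal.coe_le_coe.mpr ?_
              rw [← alpha_add_d hSfin hSstrict k, ← hsplit]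
              exact add_le_add_right hud _
            · rw [show 2*(k+1)+1 = 2*k+3 by ring, ← Uof_coe (hSfin (2*k+3))]
              exact_mod_cast hk2
          rw [hPsi, edist_self]
          exact zero_le
      calc edist (PhiSub a Sn' fn (LFun S Sn' lam' K s)) (PsiSub a S ζ s)
          ≤ edist (PhiSub a Sn' fn (LFun S Sn' lam' K s)) a
            + edist a (PsiSub a S ζ s) := edist_triangle _ a _
        _ ≤ ε2 + ε2 := add_le_add (by rw [hL]; exact hPhiBound)
            (by rw [edist_comm]; exact hPsiBound)

end MainEst

lemma edist_tsub (a b c d : ℝ≥0) : edist (a - b) (c - d) ≤ edist a c + edist b d := by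
  rw [edist_nndist, edist_nndist, edist_nndist, ← ENNReal.coe_add, ENNReal.coe_le_coe,
    ← NNReal.coe_le_coe, NNReal.coe_add, coe_nndist, coe_nndist, coe_nndist,
    NNReal.dist_eq, NNReal.dist_eq, NNReal.dist_eq]
  rw [NNReal.sub_def, NNReal.sub_def, Real.coe_toNNReal', Real.coe_toNNReal']
  refine (abs_max_sub_max_le_abs _ _ 0).trans ?_
  have h : ((a:ℝ) - b) - ((c:ℝ) - d) = ((a:ℝ) - c) - ((b:ℝ) - d) := by ring
  rw [h]
  exact abs_sub _ _

lemma eventually_forall_le {P : ℕ → ℕ → Prop} (J : ℕ)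
    (h : ∀ k, k ≤ J → ∀ᶠ n in Filter.atTop, P k n) :
    ∀ᶠ n in Filter.atTop, ∀ k, k ≤ J → P k n := by
  induction J with
  | zero =>
    refine (h 0 le_rfl).mono fun n hn k hk => ?_
    rw [Nat.le_zero.mp hk]; exact hn
  | succ J ih =>
    refine ((ih fun k hk => h k (hk.trans (Nat.le_succ J))).and (h (J+1) le_rfl)).mono ?_
    rintro n ⟨h1, h2⟩ k hk
    rcases Nat.lt_or_ge k (J+1) with hlt | hge
    · exact h1 k (by omega)
    · have : k = J+1 := by omega
      rw [this]; exact h2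

end
end StPf

open StPf in
/-- limit of the truncation map. `S` is a strict subdivision with
`|S| = +∞` (strictly increasing, never `∞`). -/
theorem statement6 {V : Type*} [MetricSpace V] [PolishSpace V] (a : V)
    (Sn : ℕ → ℕ → ℝ≥0∞) (S : ℕ → ℝ≥0∞) (f : ℕ → ℝ≥0 → V) (ζ : ℕ → ℝ≥0 → V)
    (hSn : ∀ n, IsSubdivision (Sn n)) (hS : IsSubdivision S)
    (hSstrict : StrictMono S) (hSfin : ∀ k, S k ≠ ⊤)
    (hfc : ∀ n, Cadlag (f n)) (hζ : ∀ k, 1 ≤ k → IsExcursion a (ζ k))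
    (hSconv : ∀ k, Filter.Tendsto (fun n => Sn n k) Filter.atTop (nhds (S k)))
    (hEconv : ∀ k, 1 ≤ k →
      J1Tendsto Filter.atTop (fun n => ESub a (Sn n) (f n) k) (ζ k)) :
    J1Tendsto Filter.atTop (fun n => PhiSub a (Sn n) (f n)) (PsiSub a S ζ) := by
  classical
  obtain ⟨hSmono, hScover⟩ := hS
  have hS0 : S 0 = 0 := subdiv_zero ⟨hSmono, hScover⟩
  have hEC : ∀ k : ℕ, J1Tendsto Filter.atTop
      (fun n => ESub a (Sn n) (f n) (k+1)) (ζ (k+1)) :=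
    fun k => hEconv (k+1) (by omega)
  choose lam hlamTC hlamsup Mk hMkunb hMkconv using hEC
  choose mK hmKmem hmKge using fun k => hMkunb k (dOf S k + 1)
  have hUconv : ∀ j, Filter.Tendsto (fun n => Uof (Sn n) j)
      Filter.atTop (nhds (Uof S j)) :=
    fun j => (ENNReal.tendsto_toNNReal (hSfin j)).comp (hSconv j)
  have hedistEv : ∀ j (δ : ℝ≥0∞), 0 < δ →
      ∀ᶠ n in Filter.atTop, edist (Uof (Sn n) j) (Uof S j) ≤ δ := by
    intro j δ hδ
    have hball : EMetric.closedBall (Uof S j) δ ∈ nhds (Uof S j) :=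
      EMetric.closedBall_mem_nhds _ hδ
    exact ((hUconv j).eventually_mem hball).mono fun n hn => EMetric.mem_closedBall.mp hn
  have hfinEv : ∀ j, ∀ᶠ n in Filter.atTop, Sn n j ≠ ⊤ := by
    intro j
    have hmem : Iio (⊤:ℝ≥0∞) ∈ nhds (S j) :=
      isOpen_Iio.mem_nhds (lt_top_iff_ne_top.mpr (hSfin j))
    exact ((hSconv j).eventually_mem hmem).mono fun n hn => hn.ne
  have hlamsupEv : ∀ k (δ : ℝ≥0∞), 0 < δ →
      ∀ᶠ n in Filter.atTop, ∀ s : ℝ≥0, edist (lam k n s) s ≤ δ := fun k δ hδ =>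
    ((ENNReal.tendsto_nhds_zero.mp (hlamsup k)) δ hδ).mono
      (fun n hn s => (le_iSup (fun s => edist (lam k n s) s) s).trans hn)
  have hdOfEv : ∀ k (δ : ℝ≥0∞), 0 < δ →
      ∀ᶠ n in Filter.atTop, edist (dOf (Sn n) k) (dOf S k) ≤ δ := by
    intro k δ hδ
    have h2 : (0:ℝ≥0∞) < δ/2 := ENNReal.div_pos hδ.ne' (by norm_num)
    refine ((hedistEv (2*k+2) (δ/2) h2).and (hedistEv (2*k+1) (δ/2) h2)).mono ?_
    rintro n ⟨h1', h2'⟩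
    simp only [dOf]
    calc edist (Uof (Sn n) (2*k+2) - Uof (Sn n) (2*k+1))
          (Uof S (2*k+2) - Uof S (2*k+1))
        ≤ edist (Uof (Sn n) (2*k+2)) (Uof S (2*k+2))
          + edist (Uof (Sn n) (2*k+1)) (Uof S (2*k+1)) := edist_tsub _ _ _ _
      _ ≤ δ/2 + δ/2 := add_le_add h1' h2'
      _ = δ := ENNReal.add_halves δ
  -- the limit excursions die after the interval length
  have hstepA : ∀ k (v : ℝ≥0), dOf S k < v → ζ (k+1) v = a := by
    intro k v hv
    have hdv : 0 < (v - dOf S k)/2 := div_pos (tsub_pos_of_lt hv) (by norm_num)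
    set δ := (v - dOf S k)/2 with hδdef
    have hdsum : dOf S k + (δ + δ) = v := by
      rw [hδdef, add_halves, add_tsub_cancel_of_le hv.le]
    obtain ⟨m, hmMk, hmv⟩ := hMkunb k v
    have hedz : edist a (ζ (k+1) v) ≤ 0 := by
      refine ENNReal.le_of_forall_pos_le_add fun ε hε _ => ?_
      rw [zero_add]
      have hEv1 := hlamsupEv k (↑δ) (by exact_mod_cast hdv)
      have hEv2 := hdOfEv k (↑δ) (by exact_mod_cast hdv)
      have hEv3 := hfinEv (2*k+1)
      have hEv4 := hfinEv (2*k+2)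
      have hEv5 := (ENNReal.tendsto_nhds_zero.mp (hMkconv k m hmMk)) (↑ε)
        (by exact_mod_cast hε)
      obtain ⟨n, ⟨⟨⟨h1, h2⟩, h3⟩, h4⟩, h5⟩ :=
        ((((hEv1.and hEv2).and hEv3).and hEv4).and hEv5).exists
      have hvlam : v ≤ lam k n v + δ := (edist_le_coe_iff.mp (h1 v)).2
      have hdn : dOf (Sn n) k ≤ dOf S k + δ := (edist_le_coe_iff.mp h2).1
      have hge : dOf (Sn n) k ≤ lam k n v := by
        have h6 : (dOf S k + δ) + δ ≤ lam k n v + δ := by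
          rw [add_assoc, hdsum]; exact hvlam
        exact hdn.trans (le_of_add_le_add_right h6)
      have hesub : ESub a (Sn n) (f n) (k+1) (lam k n v) = a := by
        refine esub_ge ?_
        rw [← dOf_coe h3 h4]
        exact not_lt.mpr (by exact_mod_cast hge)
      have h10 : edist (ESub a (Sn n) (f n) (k+1) (lam k n v)) (ζ (k+1) v) ≤ ↑ε :=
        le_trans (le_iSup (fun s : Set.Icc (0:ℝ≥0) m =>
          edist (ESub a (Sn n) (f n) (k+1) (lam k n (s:ℝ≥0))) (ζ (k+1) (s:ℝ≥0)))
          ⟨v, ⟨zero_le, hmv⟩⟩) h5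
      rwa [hesub] at h10
    exact (edist_eq_zero.mp (le_antisymm hedz (zero_le))).symm
  have hzeta : ∀ k (v : ℝ≥0), dOf S k ≤ v → ζ (k+1) v = a := by
    intro k v hv
    have hhit : hitTime a (ζ (k+1)) ≤ (dOf S k : ℝ≥0∞) := by
      refine ENNReal.le_of_forall_pos_le_add fun ε hε _ => ?_
      have hmem : ((dOf S k + ε : ℝ≥0) : ℝ≥0∞) ∈
          (fun t : ℝ≥0 => (t : ℝ≥0∞)) '' {t : ℝ≥0 | 0 < t ∧ ζ (k+1) t = a} :=
        ⟨_, ⟨add_pos_of_nonneg_of_pos (zero_le) hε,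
          hstepA k _ (lt_add_of_pos_right _ hε)⟩, rfl⟩
      calc hitTime a (ζ (k+1)) ≤ _ := sInf_le hmem
        _ = (dOf S k : ℝ≥0∞) + ↑ε := by rw [ENNReal.coe_add]
    exact (hζ (k+1) (by omega)).2 v (hhit.trans (by exact_mod_cast hv))
  -- eventually Good
  have hGoodEv : ∀ K, ∀ᶠ n in Filter.atTop, GoodP S (Sn n) (fun k => lam k n) K := by
    intro K
    have g1 : ∀ᶠ n in Filter.atTop, ∀ j, j ≤ 2*K+1 → Sn n j ≠ ⊤ :=
      eventually_forall_le _ (fun j _ => hfinEv j)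
    have g2 : ∀ᶠ n in Filter.atTop, ∀ k, k ≤ K →
        (k < K → Uof (Sn n) (2*k+2) < Uof (Sn n) (2*k+3)) := by
      refine eventually_forall_le _ (fun k _ => ?_)
      rcases lt_or_ge k K with hk | hk
      · exact (((hUconv (2*k+2)).eventually_lt (hUconv (2*k+3))
          (UofS_strict hSfin hSstrict (by omega)))).mono fun n hn _ => hn
      · exact Filter.Eventually.of_forall fun n hlt => absurd hlt (by omega)
    have g3 : ∀ᶠ n in Filter.atTop, ∀ k, k ≤ K →
        (k < K → uSt (Sn n) (fun k' => lam k' n) k ≤ dOf S k + 1) := by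
      refine eventually_forall_le _ (fun k _ => ?_)
      have hhalf : (0:ℝ≥0∞) < ((1/2 : ℝ≥0) : ℝ≥0∞) := by norm_num
      refine ((hlamsupEv k _ hhalf).and (hdOfEv k _ hhalf)).mono ?_
      rintro n ⟨h1, h2⟩ _
      have hlu : lam k n (uSt (Sn n) (fun k' => lam k' n) k) = dOf (Sn n) k :=
        lam_uSt (fun k' => hlamTC k' n) k
      have h3 : uSt (Sn n) (fun k' => lam k' n) k
          ≤ lam k n (uSt (Sn n) (fun k' => lam k' n) k) + (1/2 : ℝ≥0) :=
        (edist_le_coe_iff.mp (h1 _)).2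
      have h4 : dOf (Sn n) k ≤ dOf S k + (1/2 : ℝ≥0) := (edist_le_coe_iff.mp h2).1
      calc uSt (Sn n) (fun k' => lam k' n) k
          ≤ dOf (Sn n) k + (1/2 : ℝ≥0) := by rwa [hlu] at h3
        _ ≤ (dOf S k + (1/2 : ℝ≥0)) + (1/2 : ℝ≥0) := add_le_add_left h4 _
        _ = dOf S k + 1 := by rw [add_assoc, show ((1:ℝ≥0)/2 + 1/2 : ℝ≥0) = 1 by rw [← NNReal.coe_inj]; push_cast; norm_num]
    have g4 : ∀ᶠ n in Filter.atTop, ∀ k, k ≤ K → (k < K → 0 < dOf (Sn n) k) := by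
      refine eventually_forall_le _ (fun k _ => ?_)
      have hd := dOfS_pos hSfin hSstrict k
      have hd2 : (0:ℝ≥0∞) < ((dOf S k / 2 : ℝ≥0) : ℝ≥0∞) := by
        exact_mod_cast div_pos hd (by norm_num)
      refine (hdOfEv k _ hd2).mono fun n hn _ => ?_
      have h4 : dOf S k ≤ dOf (Sn n) k + dOf S k / 2 := (edist_le_coe_iff.mp hn).2
      by_contra h0
      push_neg at h0
      rw [le_zero_iff.mp h0, zero_add] at h4
      exact absurd h4 (not_le.mpr (NNReal.half_lt_self hd.ne'))
    have g5 : ∀ᶠ n in Filter.atTop, 0 < Uof (Sn n) 1 :=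
      Filter.Tendsto.eventually_lt tendsto_const_nhds (hUconv 1)
        (UofS1_pos hSfin hSstrict hS0)
    refine (((g1.and g2).and (g3.and g4)).and g5).mono ?_
    rintro n ⟨⟨⟨h1, h2⟩, h3, h4⟩, h5⟩
    exact ⟨h1, fun k hk => h2 k hk.le hk, fun k hk => h3 k hk.le hk,
      fun k hk => h4 k hk.le hk, h5⟩
  -- eventually Good with small deviation
  have hDevEv : ∀ K (ε : ℝ≥0∞), 0 < ε → ∀ᶠ n in Filter.atTop,
      GoodP S (Sn n) (fun k => lam k n) K ∧
      ∀ s : ℝ≥0, edist (LFun S (Sn n) (fun k => lam k n) K s) s ≤ ε := by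
    intro K ε hε
    have hε2 : (0:ℝ≥0∞) < ε/2 := ENNReal.div_pos hε.ne' (by norm_num)
    have e1 : ∀ᶠ n in Filter.atTop, ∀ j, j ≤ 2*K+1 →
        edist (Uof (Sn n) j) (Uof S j) ≤ ε/2 :=
      eventually_forall_le _ (fun j _ => hedistEv j _ hε2)
    have e2 : ∀ᶠ n in Filter.atTop, ∀ k, k ≤ K → ∀ s : ℝ≥0,
        edist (lam k n s) s ≤ ε/2 :=
      eventually_forall_le _ (fun k _ => hlamsupEv k _ hε2)
    refine ((hGoodEv K).and (e1.and e2)).mono ?_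
    rintro n ⟨hgood, h1, h2⟩
    refine ⟨hgood, fun s => ?_⟩
    have hh := LFun_dev hSfin hSstrict hS0 (hSn n).1 (fun k' => hlamTC k' n) hgood
      (c := ε/2) h1 (fun k hk s' => h2 k hk.le s') s
    rwa [ENNReal.add_halves] at hh
  -- diagonal extraction
  have hKey : ∀ K : ℕ, ∀ᶠ n in Filter.atTop,
      GoodP S (Sn n) (fun k => lam k n) K ∧
      ∀ s : ℝ≥0, edist (LFun S (Sn n) (fun k => lam k n) K s) s
        ≤ ((K:ℝ≥0∞)+1)⁻¹ :=
    fun K => hDevEv K _ (ENNReal.inv_pos.mpr (by simp))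
  choose N hN using fun K => Filter.eventually_atTop.mp (hKey K)
  set A : ℕ → ℕ := fun K => (Finset.range (K+1)).sup N with hA
  have hAN : ∀ K, N K ≤ A K := fun K => Finset.le_sup (Finset.self_mem_range_succ K)
  set Kn : ℕ → ℕ := fun n => Nat.findGreatest (fun K => A K ≤ n) n with hKndef
  have hdiag : ∀ J : ℕ, ∀ᶠ n in Filter.atTop, J ≤ Kn n ∧
      (GoodP S (Sn n) (fun k => lam k n) (Kn n) ∧
      ∀ s : ℝ≥0, edist (LFun S (Sn n) (fun k => lam k n) (Kn n) s) s
        ≤ ((Kn n : ℝ≥0∞)+1)⁻¹) := by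
    intro J
    rw [Filter.eventually_atTop]
    refine ⟨max (A J) J, fun n hn => ?_⟩
    have h1 : A J ≤ n := le_trans (le_max_left _ _) hn
    have h2 : J ≤ n := le_trans (le_max_right _ _) hn
    have hKge : J ≤ Kn n := Nat.le_findGreatest (P := fun K => A K ≤ n) h2 h1
    have hSpec : A (Kn n) ≤ n := Nat.findGreatest_spec (P := fun K => A K ≤ n) h2 h1
    exact ⟨hKge, hN (Kn n) n (le_trans (hAN (Kn n)) hSpec)⟩
  -- conclusion
  refine ⟨fun n => LFun S (Sn n) (fun k => lam k n) (Kn n),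
    fun n => LFun_timeChange hSfin hSstrict hS0 (hSn n).1 (fun k => hlamTC k n),
    ?_, Set.range (fun J : ℕ => Uof S (2*J+1)), ?_, ?_⟩
  · -- deviation of the time changes tends to 0
    rw [ENNReal.tendsto_nhds_zero]
    intro ε hε
    obtain ⟨K0, hK0⟩ := ENNReal.exists_inv_nat_lt hε.ne'
    refine (hdiag K0).mono ?_
    rintro n ⟨hKge, _, hdev⟩
    refine iSup_le fun s => (hdev s).trans ?_
    calc ((Kn n : ℝ≥0∞)+1)⁻¹ ≤ ((K0:ℝ≥0∞))⁻¹ := by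
          refine ENNReal.inv_le_inv' ?_
          calc (K0:ℝ≥0∞) ≤ (Kn n : ℝ≥0∞) := by exact_mod_cast hKge
            _ ≤ (Kn n : ℝ≥0∞) + 1 := le_self_add
      _ ≤ ε := hK0.le
  · -- unboundedness of M
    intro r
    obtain ⟨j, hj1, hj2⟩ := hScover r
    refine ⟨Uof S (2*j+1), ⟨j, rfl⟩, ?_⟩
    have h3 : (r : ℝ≥0∞) < S (2*j+1) := hj2.trans_le (hSmono (by omega))
    rw [← Uof_coe (hSfin (2*j+1))] at h3
    exact_mod_cast h3.le
  · -- uniform convergence on [0, m]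
    rintro m ⟨J, rfl⟩
    rw [ENNReal.tendsto_nhds_zero]
    intro ε hε
    have hε2 : (0:ℝ≥0∞) < ε/2 := ENNReal.div_pos hε.ne' (by norm_num)
    have F1 : ∀ᶠ n in Filter.atTop, ∀ k, k ≤ J → ∀ u : ℝ≥0, u ≤ mK k →
        edist (ESub a (Sn n) (f n) (k+1) (lam k n u)) (ζ (k+1) u) ≤ ε/2 := by
      refine eventually_forall_le _ (fun k _ => ?_)
      refine ((ENNReal.tendsto_nhds_zero.mp (hMkconv k (mK k) (hmKmem k))) (ε/2)
        hε2).mono ?_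
      intro n hn u hu
      exact le_trans (le_iSup (fun s : Set.Icc (0:ℝ≥0) (mK k) =>
        edist (ESub a (Sn n) (f n) (k+1) (lam k n (s:ℝ≥0))) (ζ (k+1) (s:ℝ≥0)))
        ⟨u, ⟨zero_le, hu⟩⟩) hn
    refine ((hdiag (J+1)).and F1).mono ?_
    rintro n ⟨⟨hKge, hgood, _⟩, hF1⟩
    refine iSup_le ?_
    rintro ⟨s, hs⟩
    have hh := main_est hSfin hSstrict hS0 (hSn n).1 (fun k => hlamTC k n) hgood
      (show J < Kn n by omega) (fun k _ => hmKge k) (fun k hk u hu => hF1 k hk u hu)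
      (fun k _ v hv => hzeta k v hv) (s := s) hs.2
    rwa [ENNReal.add_halves] at hh
end

section
/- Let f : [0,∞) → ℝ^d be càdlàg, ε > 0, and define T^↑(f,ε) = inf{t ≥ 0 : |f(t)| > ε} (with |x| = max of coordinate absolute values). If f_n → f in the J1 topology then limsup_n T^↑(f_n, ε) ≤ T^↑(f, ε). If moreover T^↑(f, ε) = T̃^↑(f, ε) where T̃^↑(f,ε) = inf{t ≥ 0 : |f(t)| ≥ ε or |f(t−)| ≥ ε}, then T^↑(f_n, ε) → T^↑(f, ε). -/
open scoped NNReal ENNReal Topology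
open Filter Set

noncomputable section

/-- `T^↑(f,ε) = inf{t ≥ 0 : |f(t)| > ε}`, where `‖·‖` is the sup norm on `ℝ^d`. -/
def Tup {d : ℕ} (f : ℝ≥0 → (Fin d → ℝ)) (ε : ℝ) : ℝ≥0∞ :=
  sInf ((fun t : ℝ≥0 => (t : ℝ≥0∞)) '' {t : ℝ≥0 | ε < ‖f t‖})

/-- `T̃^↑(f,ε) = inf{t ≥ 0 : |f(t)| ≥ ε or |f(t−)| ≥ ε}`. -/
def TupTilde {d : ℕ} (f : ℝ≥0 → (Fin d → ℝ)) (ε : ℝ) : ℝ≥0∞ :=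
  sInf ((fun t : ℝ≥0 => (t : ℝ≥0∞)) ''
    {t : ℝ≥0 | ε ≤ ‖f t‖ ∨ ε ≤ ‖Function.leftLim f t‖})

end

/-- Auxiliary compactness lemma: if a càdlàg function has norm (and left-limit
norm) strictly below `ε` on `[0,c]`, then it is uniformly below `ε - δ` there. -/
lemma cadlag_unif_bound {d : ℕ} {F : ℝ≥0 → (Fin d → ℝ)} (hFc : Cadlag F) {ε : ℝ} {c : ℝ≥0}
    (h : ∀ t : ℝ≥0, t ≤ c → ‖F t‖ < ε ∧ ‖Function.leftLim F t‖ < ε) :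
    ∃ δ : ℝ, 0 < δ ∧ ∀ t : ℝ≥0, t ≤ c → ‖F t‖ ≤ ε - δ := by
  by_contra hcon
  push_neg at hcon
  choose t ht1 ht2 using fun k : ℕ => hcon (1/(k+1)) (by positivity)
  obtain ⟨a, ha, φ, hφ, hta⟩ :=
    (isCompact_Icc (a := (0:ℝ≥0)) (b := c)).tendsto_subseq (x := t)
      (fun k => ⟨zero_le, ht1 k⟩)
  have key : ∀ (ψ : ℕ → ℕ) (L : Fin d → ℝ), StrictMono ψ →
      Tendsto (fun k => F (t (φ (ψ k)))) atTop (𝓝 L) → ε ≤ ‖L‖ := by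
    intro ψ L hψ hL
    have hnorm : Tendsto (fun k => ‖F (t (φ (ψ k)))‖) atTop (𝓝 ‖L‖) := hL.norm
    have h1 : ∀ k0 : ℕ, ε - 1/(k0+1) ≤ ‖L‖ := by
      intro k0
      refine ge_of_tendsto hnorm ?_
      filter_upwards [eventually_ge_atTop k0] with k hk
      have hj : k0 ≤ φ (ψ k) := le_trans hk (le_trans hψ.le_apply hφ.le_apply)
      have hj' : (k0:ℝ) + 1 ≤ (φ (ψ k) : ℝ) + 1 := by
        have := (Nat.cast_le (α := ℝ)).mpr hj; linarith
      have h2 : 1/((φ (ψ k):ℝ)+1) ≤ 1/((k0:ℝ)+1) :=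
        one_div_le_one_div_of_le (by positivity) hj'
      have h3 := ht2 (φ (ψ k))
      linarith
    have h4 : Tendsto (fun k0 : ℕ => ε - 1/((k0:ℝ)+1)) atTop (𝓝 (ε - 0)) :=
      tendsto_const_nhds.sub tendsto_one_div_add_atTop_nhds_zero_nat
    simpa using le_of_tendsto h4 (Eventually.of_forall h1)
  by_cases hc : ∃ᶠ k in atTop, a ≤ t (φ k)
  · obtain ⟨ψ, hψ, hψ'⟩ := Filter.extraction_of_frequently_atTop hc
    have htend : Tendsto (fun k => t (φ (ψ k))) atTop (𝓝[≥] a) := by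
      rw [tendsto_nhdsWithin_iff]
      exact ⟨hta.comp hψ.tendsto_atTop, Eventually.of_forall fun k => hψ' k⟩
    have hle := key ψ (F a) hψ ((hFc.1 a).tendsto.comp htend)
    exact absurd (h a ha.2).1 (not_lt.mpr hle)
  · have hev : ∀ᶠ k in atTop, t (φ k) < a := by
      have := Filter.not_frequently.mp hc
      filter_upwards [this] with k hk
      exact not_le.mp hk
    obtain ⟨k0, hk0⟩ := hev.exists
    have hapos : 0 < a := lt_of_le_of_lt (zero_le) hk0
    obtain ⟨L, hL⟩ := hFc.2 a hapos
    have hne : 𝓝[<] a ≠ ⊥ := (nhdsWithin_Iio_self_neBot' (α := ℝ≥0) ⟨0, hapos⟩).ne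
    have hleft : Function.leftLim F a = L := @leftLim_eq_of_tendsto _ _ _ _ _ _ _ _ _ _ ⟨hne⟩ hL
    have htend : Tendsto (fun k => t (φ k)) atTop (𝓝[<] a) := by
      rw [tendsto_nhdsWithin_iff]
      exact ⟨hta, hev⟩
    have hle := key id L strictMono_id (hL.comp htend)
    rw [← hleft] at hle
    exact absurd (h a ha.2).2 (not_lt.mpr hle)

/-- `limsup T^↑(f_n,ε) ≤ T^↑(f,ε)` under J1 convergence, with
equality of limits when `T^↑(f,ε) = T̃^↑(f,ε)`. -/
theorem statement8 {d : ℕ} (f : ℕ → ℝ≥0 → (Fin d → ℝ)) (F : ℝ≥0 → (Fin d → ℝ))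
    (hfc : ∀ n, Cadlag (f n)) (hFc : Cadlag F) (ε : ℝ) (hε : 0 < ε)
    (hconv : J1Tendsto Filter.atTop f F) :
    Filter.limsup (fun n => Tup (f n) ε) Filter.atTop ≤ Tup F ε ∧
    (Tup F ε = TupTilde F ε →
      Filter.Tendsto (fun n => Tup (f n) ε) Filter.atTop (nhds (Tup F ε))) := by
  obtain ⟨l, hl, hl0, M, hM, hMconv⟩ := hconv
  have part1 : Filter.limsup (fun n => Tup (f n) ε) Filter.atTop ≤ Tup F ε := by
    refine le_of_forall_gt_imp_ge_of_dense fun b hb => ?_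
    rw [Tup, sInf_lt_iff] at hb
    obtain ⟨x, hx, hxb⟩ := hb
    obtain ⟨t, ht, rfl⟩ := hx
    obtain ⟨m, hm, htm⟩ := hM t
    set δ := ‖F t‖ - ε with hδdef
    have hδ : 0 < δ := sub_pos.mpr ht
    have h1 : ∀ᶠ n in atTop, (⨆ s : ℝ≥0, edist (l n s) s) < b - (t:ℝ≥0∞) :=
      hl0.eventually_lt_const (tsub_pos_of_lt hxb)
    have h2 : ∀ᶠ n in atTop,
        (⨆ s : Set.Icc (0:ℝ≥0) m, edist (f n (l n (s:ℝ≥0))) (F (s:ℝ≥0))) < ENNReal.ofReal (δ/2) :=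
      (hMconv m hm).eventually_lt_const (by simp [ENNReal.ofReal_pos]; positivity)
    refine Filter.limsup_le_of_le (by isBoundedDefault) ?_
    filter_upwards [h1, h2] with n h1n h2n
    have hedist : edist (f n (l n t)) (F t) < ENNReal.ofReal (δ/2) :=
      lt_of_le_of_lt
        (le_iSup (fun s : Set.Icc (0:ℝ≥0) m => edist (f n (l n (s:ℝ≥0))) (F (s:ℝ≥0)))
          ⟨t, ⟨zero_le, htm⟩⟩) h2n
    have hdist : dist (f n (l n t)) (F t) < δ/2 := by
      rw [edist_dist] at hedist
      exact (ENNReal.ofReal_lt_ofReal_iff (by positivity)).mp hedist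
    have hnorm : ε < ‖f n (l n t)‖ := by
      have h3 : ‖F t‖ - ‖f n (l n t)‖ ≤ ‖F t - f n (l n t)‖ := norm_sub_norm_le _ _
      have h4 : ‖F t - f n (l n t)‖ = dist (f n (l n t)) (F t) := by
        rw [dist_eq_norm, norm_sub_rev]
      rw [h4] at h3
      simp only [hδdef] at hdist h3 ⊢
      linarith
    have hTle : Tup (f n) ε ≤ (l n t : ℝ≥0∞) := sInf_le ⟨l n t, hnorm, rfl⟩
    have hlnt : (l n t : ℝ≥0∞) ≤ (t:ℝ≥0∞) + edist (l n t) t := by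
      rw [edist_nndist, ← ENNReal.coe_add, ENNReal.coe_le_coe, ← NNReal.coe_le_coe]
      push_cast
      have h5 : ((l n t : ℝ)) - (t:ℝ) ≤ dist (l n t) t := by
        rw [NNReal.dist_eq]
        exact le_abs_self _
      have h6 : ((nndist (l n t) t : ℝ)) = dist (l n t) t := coe_nndist _ _
      linarith
    refine le_of_lt ?_
    calc Tup (f n) ε ≤ (l n t : ℝ≥0∞) := hTle
      _ ≤ (t:ℝ≥0∞) + edist (l n t) t := hlnt
      _ ≤ (t:ℝ≥0∞) + ⨆ s : ℝ≥0, edist (l n s) s :=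
          add_le_add_right (le_iSup (fun s : ℝ≥0 => edist (l n s) s) t) _
      _ < (t:ℝ≥0∞) + (b - (t:ℝ≥0∞)) := ENNReal.add_lt_add_left ENNReal.coe_ne_top h1n
      _ = b := add_tsub_cancel_of_le hxb.le
  refine ⟨part1, fun heq => ?_⟩
  have part2 : Tup F ε ≤ Filter.liminf (fun n => Tup (f n) ε) Filter.atTop := by
    refine le_of_forall_lt_imp_le_of_dense fun b hb => ?_
    obtain ⟨c, hbc, hc⟩ := ENNReal.lt_iff_exists_nnreal_btwn.mp hb
    obtain ⟨c2, hcc2, hc2⟩ := ENNReal.lt_iff_exists_nnreal_btwn.mp hc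
    have hcc2' : c < c2 := by exact_mod_cast hcc2
    have hF : ∀ t : ℝ≥0, t ≤ c2 → ‖F t‖ < ε ∧ ‖Function.leftLim F t‖ < ε := by
      intro t htc2
      by_contra hcon
      rw [not_and_or, not_lt, not_lt] at hcon
      have hmem : TupTilde F ε ≤ (t:ℝ≥0∞) := sInf_le ⟨t, hcon, rfl⟩
      rw [← heq] at hmem
      have h7 : Tup F ε ≤ (c2 : ℝ≥0∞) := hmem.trans (by exact_mod_cast htc2)
      rw [heq] at h7 hc2
      exact absurd (h7.trans_lt hc2) (lt_irrefl _)
    obtain ⟨δ, hδ, hδF⟩ := cadlag_unif_bound hFc hF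
    obtain ⟨m, hm, hmge⟩ := hM c2
    have h1 : ∀ᶠ n in atTop, (⨆ s : ℝ≥0, edist (l n s) s) < ((c2 - c : ℝ≥0) : ℝ≥0∞) :=
      hl0.eventually_lt_const (by exact_mod_cast tsub_pos_of_lt hcc2')
    have h2 : ∀ᶠ n in atTop,
        (⨆ s : Set.Icc (0:ℝ≥0) m, edist (f n (l n (s:ℝ≥0))) (F (s:ℝ≥0))) < ENNReal.ofReal δ :=
      (hMconv m hm).eventually_lt_const (by simp [ENNReal.ofReal_pos, hδ])
    refine Filter.le_liminf_of_le (by isBoundedDefault) ?_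
    filter_upwards [h1, h2] with n h1n h2n
    refine le_trans hbc.le (le_sInf ?_)
    rintro x ⟨s, hs, rfl⟩
    by_contra hsc
    rw [not_le] at hsc
    have hsc2 : s < c := by simpa using hsc
    obtain ⟨u, hu⟩ := (hl n).2.2 s
    have hd : nndist (l n u) u < c2 - c := by
      have h8 := lt_of_le_of_lt (le_iSup (fun s : ℝ≥0 => edist (l n s) s) u) h1n
      rwa [edist_nndist, ENNReal.coe_lt_coe] at h8
    have huc2 : u ≤ c2 := by
      have h4 : (u:ℝ) ≤ (l n u : ℝ) + dist (l n u) u := by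
        rw [NNReal.dist_eq]
        have := le_abs_self ((u:ℝ) - (l n u : ℝ))
        rw [abs_sub_comm] at this
        linarith
      have hdr : dist (l n u) u ≤ ((c2 - c : ℝ≥0) : ℝ) := by
        rw [← coe_nndist]
        exact_mod_cast hd.le
      rw [NNReal.coe_sub hcc2'.le] at hdr
      have hs' : ((l n u : ℝ≥0) : ℝ) ≤ (c:ℝ) := by
        rw [hu]; exact_mod_cast hsc2.le
      have : (u:ℝ) ≤ (c2:ℝ) := by linarith
      exact_mod_cast this
    have hum : u ∈ Set.Icc (0:ℝ≥0) m := ⟨zero_le, huc2.trans hmge⟩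
    have hedist : edist (f n (l n u)) (F u) < ENNReal.ofReal δ :=
      lt_of_le_of_lt
        (le_iSup (fun s : Set.Icc (0:ℝ≥0) m => edist (f n (l n (s:ℝ≥0))) (F (s:ℝ≥0)))
          ⟨u, hum⟩) h2n
    have hdist : dist (f n s) (F u) < δ := by
      rw [hu] at hedist
      rw [edist_dist] at hedist
      exact (ENNReal.ofReal_lt_ofReal_iff hδ).mp hedist
    have hFu := hδF u huc2
    have h9 : ‖f n s‖ - ‖F u‖ ≤ ‖f n s - F u‖ := norm_sub_norm_le _ _
    rw [← dist_eq_norm] at h9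
    have : ε < ε := by
      calc ε < ‖f n s‖ := hs
        _ ≤ ‖F u‖ + dist (f n s) (F u) := by linarith
        _ < (ε - δ) + δ := by have := hFu; linarith
        _ = ε := by ring
    exact absurd this (lt_irrefl _)
  exact tendsto_of_le_liminf_of_limsup_le part2 part1
end

section
/- Let (λ_n), (μ_n) be sequences of increasing bijections of [0,∞) with ‖λ_n − Id‖_∞ → 0, ‖μ_n − Id‖_∞ → 0, suppose t_n → t > 0 with λ_n(t) = t_n for all n, and define ν_n(s) = λ_n(s) for s < t and ν_n(s) = μ_n(s−t) + t_n for s ≥ t. Then each ν_n is an increasing bijection of [0,∞), and ‖ν_n − Id‖_∞ ≤ ‖λ_n − Id‖_∞ + ‖μ_n − Id‖_∞ + |t − t_n|, hence ‖ν_n − Id‖_∞ → 0. -/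
open scoped NNReal ENNReal Topology
open Filter Set

lemma nnreal_edist_add_add (a b c d : ℝ≥0) :
    edist (a + c) (b + d) ≤ edist a b + edist c d := by
  rw [edist_dist, edist_dist, edist_dist,
    ← ENNReal.ofReal_add dist_nonneg dist_nonneg]
  apply ENNReal.ofReal_le_ofReal
  simp only [NNReal.dist_eq, NNReal.coe_add]
  calc |(↑a + ↑c) - (↑b + ↑d)| = |((a:ℝ) - b) + ((c:ℝ) - d)| := by ring_nf
    _ ≤ |(a:ℝ) - b| + |(c:ℝ) - d| := abs_add_le _ _

/-- pasting two vanishing families of time changes at `t0`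
(with `λ_n t0 = t_n`) gives a vanishing family of time changes, with the
explicit triangle bound. -/
theorem statement13 (l m : ℕ → ℝ≥0 → ℝ≥0) (t : ℕ → ℝ≥0) (t0 : ℝ≥0)
    (hl : ∀ n, IsTimeChange (l n)) (hm : ∀ n, IsTimeChange (m n))
    (hln : Filter.Tendsto (fun n => ⨆ s : ℝ≥0, edist (l n s) s)
      Filter.atTop (nhds 0))
    (hmn : Filter.Tendsto (fun n => ⨆ s : ℝ≥0, edist (m n s) s)
      Filter.atTop (nhds 0))
    (ht : Filter.Tendsto t Filter.atTop (nhds t0)) (ht0 : 0 < t0)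
    (hfix : ∀ n, l n t0 = t n)
    (ν : ℕ → ℝ≥0 → ℝ≥0)
    (hν : ν = fun n s => if s < t0 then l n s else m n (s - t0) + t n) :
    (∀ n, IsTimeChange (ν n)) ∧
    (∀ n, (⨆ s : ℝ≥0, edist (ν n s) s) ≤
      (⨆ s : ℝ≥0, edist (l n s) s) + (⨆ s : ℝ≥0, edist (m n s) s) + edist t0 (t n)) ∧
    Filter.Tendsto (fun n => ⨆ s : ℝ≥0, edist (ν n s) s) Filter.atTop (nhds 0) := by
  subst hν
  have key : ∀ n, IsTimeChange (fun s => if s < t0 then l n s else m n (s - t0) + t n) := by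
    intro n
    obtain ⟨hlm, hlb⟩ := hl n
    obtain ⟨hmm, hmb⟩ := hm n
    have hsm : StrictMono (fun s => if s < t0 then l n s else m n (s - t0) + t n) := by
      intro s s' hss'
      by_cases h1 : s < t0
      · by_cases h2 : s' < t0
        · simpa [h1, h2] using hlm hss'
        · push_neg at h2
          simp only [h1, (not_lt.mpr h2 : ¬ s' < t0), if_true, if_false]
          have : l n s < t n := by rw [← hfix n]; exact hlm h1
          exact lt_of_lt_of_le this (le_add_self)
      · push_neg at h1
        have h2 : ¬ s' < t0 := not_lt.mpr (h1.trans hss'.le)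
        simp only [(not_lt.mpr h1 : ¬ s < t0), h2, if_false]
        have : s - t0 < s' - t0 := tsub_lt_tsub_right_of_le h1 hss'
        exact add_lt_add_of_lt_of_le (hmm this) le_rfl
    refine ⟨hsm, hsm.injective, ?_⟩
    intro y
    by_cases hy : y < t n
    · obtain ⟨x, hx⟩ := hlb.2 y
      have hxlt : x < t0 := by
        by_contra hc
        push_neg at hc
        have := hlm.le_iff_le.mpr hc
        rw [hx, hfix n] at this
        exact absurd this (not_le.mpr hy)
      exact ⟨x, by simp [hxlt, hx]⟩
    · push_neg at hy
      obtain ⟨u, hu⟩ := hmb.2 (y - t n)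
      refine ⟨u + t0, ?_⟩
      have hnlt : ¬ u + t0 < t0 := by simp
      simp only [hnlt, if_false, add_tsub_cancel_right, hu]
      exact tsub_add_cancel_of_le hy
  have bound : ∀ n, (⨆ s : ℝ≥0, edist ((fun s => if s < t0 then l n s else m n (s - t0) + t n) s) s) ≤
      (⨆ s : ℝ≥0, edist (l n s) s) + (⨆ s : ℝ≥0, edist (m n s) s) + edist t0 (t n) := by
    intro n
    apply iSup_le
    intro s
    by_cases h : s < t0
    · simp only [h, if_true]
      calc edist (l n s) s ≤ ⨆ s : ℝ≥0, edist (l n s) s := le_iSup (fun s => edist (l n s) s) s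
        _ ≤ _ := le_add_right (le_add_right le_rfl)
    · push_neg at h
      simp only [(not_lt.mpr h : ¬ s < t0), if_false]
      have hs : s = (s - t0) + t0 := (tsub_add_cancel_of_le h).symm
      calc edist (m n (s - t0) + t n) s
          = edist (m n (s - t0) + t n) ((s - t0) + t0) := by rw [← hs]
        _ ≤ edist (m n (s - t0)) (s - t0) + edist (t n) t0 :=
            nnreal_edist_add_add _ _ _ _
        _ ≤ (⨆ s : ℝ≥0, edist (m n s) s) + edist t0 (t n) := by
            rw [edist_comm (t n) t0]
            exact add_le_add (le_iSup (fun s => edist (m n s) s) (s - t0)) le_rfl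
        _ ≤ _ := by
            rw [add_assoc]
            exact le_add_self
  refine ⟨key, bound, ?_⟩
  have hC : Filter.Tendsto (fun n => edist t0 (t n)) Filter.atTop (nhds 0) := by
    have := (tendsto_const_nhds (x := t0)).edist ht
    simpa using this
  have hsum : Filter.Tendsto
      (fun n => (⨆ s : ℝ≥0, edist (l n s) s) + (⨆ s : ℝ≥0, edist (m n s) s) + edist t0 (t n))
      Filter.atTop (nhds 0) := by
    have h1 := hln.add hmn
    have h2 := h1.add hC
    simpa using h2
  exact tendsto_of_tendsto_of_tendsto_of_le_of_le tendsto_const_nhds hsum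
    (fun n => zero_le) bound
end

section
/- Under assumptions (H1): c_n N_n(φ > ε) → N(φ > ε) for all non-atoms ε, (H2): c_n N_n((1 − e^{−λT}); φ ≤ ε) → N((1 − e^{−λT}); φ ≤ ε) for all λ > 0 and non-atoms ε, and N(φ = +∞) = 0, the convergence (H3) holds: c_n N_n(1 − e^{−λT}) → N(1 − e^{−λT}) for every λ > 0. -/
open scoped NNReal ENNReal Topology
open Filter MeasureTheory

noncomputable section

/-- `1 − e^{−λ x}` for `x ∈ [0,∞]`, as an `ℝ≥0∞`-valued function (equal to `1`
at `x = ∞`). -/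
def oneMinusExpNeg (lam : ℝ) (x : ℝ≥0∞) : ℝ≥0∞ :=
  if x = ⊤ then 1 else ENNReal.ofReal (1 - Real.exp (-(lam * x.toReal)))

end

lemma oneMinusExpNeg_le_one (lam : ℝ) (x : ℝ≥0∞) : oneMinusExpNeg lam x ≤ 1 := by
  unfold oneMinusExpNeg
  split
  · exact le_rfl
  · rw [ENNReal.ofReal_le_one]
    have := Real.exp_pos (-(lam * x.toReal))
    linarith

lemma measurable_oneMinusExpNeg (lam : ℝ) : Measurable (oneMinusExpNeg lam) := by
  unfold oneMinusExpNeg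
  apply Measurable.ite
  · exact measurableSet_eq
  · exact measurable_const
  · exact ENNReal.measurable_ofReal.comp <|
      (measurable_const.sub ((Real.continuous_exp.measurable).comp
        (measurable_const.mul ENNReal.measurable_toReal).neg))

/-- existence of arbitrarily large non-atoms -/
lemma exists_nonatom {E : Type*} [MeasurableSpace E] (N : Measure E)
    (φ : E → ℝ≥0∞) (hφ : Measurable φ)
    (hfin : ∀ ε : ℝ≥0∞, 0 < ε → N {e | ε < φ e} < ⊤) (k : ℕ) :
    ∃ ε : ℝ≥0∞, (k : ℝ≥0∞) + 1 < ε ∧ ε ≠ ⊤ ∧ N {e | φ e = ε} = 0 := by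
  set a : ℝ≥0∞ := (k : ℝ≥0∞) + 1 with ha
  have hapos : 0 < a := lt_of_lt_of_le zero_lt_one le_add_self
  set μ := N.restrict {e | a < φ e} with hμ
  have : IsFiniteMeasure μ := by
    constructor
    rw [hμ, Measure.restrict_apply_univ]
    exact hfin a hapos
  have hg : Measurable fun e => (φ e).toReal := ENNReal.measurable_toReal.comp hφ
  have hS : (Set.Ioi ((k : ℝ) + 1)).Countable → False := by
    intro h
    have h1 := Cardinal.mk_Ioi_real ((k : ℝ) + 1)
    rw [← Cardinal.le_aleph0_iff_set_countable, h1] at h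
    exact absurd (h.trans_lt Cardinal.aleph0_lt_continuum).false id
  have hcnt := MeasureTheory.Measure.countable_meas_level_set_pos (μ := μ) hg
  have : ¬ (Set.Ioi ((k : ℝ) + 1) ⊆ {t : ℝ | 0 < μ {e | (φ e).toReal = t}}) := by
    intro h
    exact hS (hcnt.mono h)
  obtain ⟨t, ht, htS⟩ := Set.not_subset.1 this
  rw [Set.mem_Ioi] at ht
  have hk0 : (0:ℝ) ≤ (k:ℝ) := Nat.cast_nonneg k
  have htpos : (0:ℝ) < t := by linarith
  refine ⟨ENNReal.ofReal t, ?_, ENNReal.ofReal_ne_top, ?_⟩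
  · have : a = ENNReal.ofReal ((k : ℝ) + 1) := by
      rw [ENNReal.ofReal_add (by positivity) zero_le_one, ENNReal.ofReal_natCast,
        ENNReal.ofReal_one]
    rw [this]
    exact (ENNReal.ofReal_lt_ofReal_iff htpos).2 ht
  · have hsub : {e | φ e = ENNReal.ofReal t} ⊆
        {e | (φ e).toReal = t} ∩ {e | a < φ e} := by
      intro e he
      simp only [Set.mem_setOf_eq] at he
      constructor
      · simp [Set.mem_setOf_eq, he, ENNReal.toReal_ofReal htpos.le]
      · simp only [Set.mem_setOf_eq, he]
        have : a = ENNReal.ofReal ((k : ℝ) + 1) := by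
          rw [ENNReal.ofReal_add (by positivity) zero_le_one, ENNReal.ofReal_natCast,
            ENNReal.ofReal_one]
        rw [this]
        exact (ENNReal.ofReal_lt_ofReal_iff htpos).2 ht
    have hμt : μ {e | (φ e).toReal = t} = 0 := by
      simpa [not_lt, le_zero_iff] using htS
    have hres : μ {e | (φ e).toReal = t}
        = N ({e | (φ e).toReal = t} ∩ {e | a < φ e}) :=
      Measure.restrict_apply (hg (measurableSet_singleton t))
    exact measure_mono_null hsub (hres.symm.trans hμt)

/-- (H1) and (H2), together with `N(φ = +∞) = 0`, imply (H3):
`c_n N_n(1 − e^{−λT}) → N(1 − e^{−λT})` for every `λ > 0`. -/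
theorem statement15 {E : Type*} [MeasurableSpace E]
    (Nn : ℕ → Measure E) (hNn : ∀ n, IsFiniteMeasure (Nn n))
    (N : Measure E) (φ : E → ℝ≥0∞) (hφ : Measurable φ)
    (T : E → ℝ≥0∞) (hT : Measurable T)
    (c : ℕ → ℝ≥0) (hc : Filter.Tendsto c Filter.atTop Filter.atTop)
    (hfin : ∀ ε : ℝ≥0∞, 0 < ε → N {e | ε < φ e} < ⊤)
    (hNinfty : N {e | φ e = ⊤} = 0)
    (H1 : ∀ ε : ℝ≥0∞, 0 < ε → ε ≠ ⊤ → N {e | φ e = ε} = 0 →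
      Filter.Tendsto (fun n => (c n : ℝ≥0∞) * Nn n {e | ε < φ e})
        Filter.atTop (nhds (N {e | ε < φ e})))
    (H2 : ∀ lam : ℝ, 0 < lam → ∀ ε : ℝ≥0∞, 0 < ε → ε ≠ ⊤ → N {e | φ e = ε} = 0 →
      Filter.Tendsto
        (fun n => (c n : ℝ≥0∞) * ∫⁻ e in {e | φ e ≤ ε}, oneMinusExpNeg lam (T e) ∂(Nn n))
        Filter.atTop (nhds (∫⁻ e in {e | φ e ≤ ε}, oneMinusExpNeg lam (T e) ∂N))) :
    ∀ lam : ℝ, 0 < lam →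
      Filter.Tendsto (fun n => (c n : ℝ≥0∞) * ∫⁻ e, oneMinusExpNeg lam (T e) ∂(Nn n))
        Filter.atTop (nhds (∫⁻ e, oneMinusExpNeg lam (T e) ∂N)) := by
  intro lam hlam
  set f : E → ℝ≥0∞ := fun e => oneMinusExpNeg lam (T e) with hfdef
  have hf1 : ∀ e, f e ≤ 1 := fun e => oneMinusExpNeg_le_one _ _
  set I : ℝ≥0∞ := ∫⁻ e, f e ∂N with hI
  set u : ℕ → ℝ≥0∞ := fun n => (c n : ℝ≥0∞) * ∫⁻ e, f e ∂(Nn n) with hu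
  -- the sets
  have hms : ∀ ε : ℝ≥0∞, MeasurableSet {e | φ e ≤ ε} := fun ε => hφ measurableSet_Iic
  have hcompl : ∀ ε : ℝ≥0∞, {e | φ e ≤ ε}ᶜ = {e | ε < φ e} := by
    intro ε; ext e; simp [not_le]
  -- decomposition of integrals
  have hdec : ∀ (μ : Measure E) (ε : ℝ≥0∞),
      ∫⁻ e, f e ∂μ = (∫⁻ e in {e | φ e ≤ ε}, f e ∂μ) + ∫⁻ e in {e | ε < φ e}, f e ∂μ := by
    intro μ ε
    rw [← hcompl ε, lintegral_add_compl f (hms ε)]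
  have htail : ∀ (μ : Measure E) (ε : ℝ≥0∞),
      (∫⁻ e in {e | ε < φ e}, f e ∂μ) ≤ μ {e | ε < φ e} := by
    intro μ ε
    calc (∫⁻ e in {e | ε < φ e}, f e ∂μ) ≤ ∫⁻ _ in {e | ε < φ e}, 1 ∂μ :=
          lintegral_mono hf1
      _ = μ {e | ε < φ e} := setLIntegral_one _
  -- fixed nonatom ε bounds
  have hbound : ∀ ε : ℝ≥0∞, 0 < ε → ε ≠ ⊤ → N {e | φ e = ε} = 0 →
      ((∫⁻ e in {e | φ e ≤ ε}, f e ∂N) ≤ liminf u atTop ∧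
        limsup u atTop ≤ (∫⁻ e in {e | φ e ≤ ε}, f e ∂N) + N {e | ε < φ e}) := by
    intro ε hε0 hεt hεa
    have hJ := H2 lam hlam ε hε0 hεt hεa
    have hA := H1 ε hε0 hεt hεa
    have hle : ∀ n, u n ≤ (c n : ℝ≥0∞) * (∫⁻ e in {e | φ e ≤ ε}, f e ∂(Nn n))
        + (c n : ℝ≥0∞) * Nn n {e | ε < φ e} := by
      intro n
      calc u n = (c n : ℝ≥0∞) * ((∫⁻ e in {e | φ e ≤ ε}, f e ∂(Nn n))
              + ∫⁻ e in {e | ε < φ e}, f e ∂(Nn n)) := by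
            simp only [hu]; rw [hdec (Nn n) ε]
        _ = (c n : ℝ≥0∞) * (∫⁻ e in {e | φ e ≤ ε}, f e ∂(Nn n))
              + (c n : ℝ≥0∞) * ∫⁻ e in {e | ε < φ e}, f e ∂(Nn n) := mul_add _ _ _
        _ ≤ _ := add_le_add_right (mul_le_mul_right (htail _ _) _) _
    have hge : ∀ n, (c n : ℝ≥0∞) * (∫⁻ e in {e | φ e ≤ ε}, f e ∂(Nn n)) ≤ u n := by
      intro n
      simp only [hu]
      exact mul_le_mul_right (setLIntegral_le_lintegral _ _) _
    constructor
    · rw [← hJ.liminf_eq]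
      exact liminf_le_liminf (Eventually.of_forall hge)
    · rw [← (hJ.add hA).limsup_eq]
      exact limsup_le_limsup (Eventually.of_forall hle)
  -- the vanishing tail sequence
  set B : ℕ → ℝ≥0∞ := fun k => N {e | (k : ℝ≥0∞) < φ e} with hBdef
  have hB : Tendsto B atTop (𝓝 0) := by
    have hanti : Antitone fun k : ℕ => {e | (k : ℝ≥0∞) < φ e} := by
      intro k m hkm e he
      simp only [Set.mem_setOf_eq] at he ⊢
      exact lt_of_le_of_lt (by exact_mod_cast Nat.cast_le.2 hkm) he
    have hmeas : ∀ k : ℕ, NullMeasurableSet {e | (k : ℝ≥0∞) < φ e} N :=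
      fun k => (hφ measurableSet_Ioi).nullMeasurableSet
    have hfin1 : ∃ k : ℕ, N {e | ((k : ℕ) : ℝ≥0∞) < φ e} ≠ ∞ :=
      ⟨1, by simpa using (hfin 1 one_pos).ne⟩
    have h := tendsto_measure_iInter_atTop (μ := N) hmeas hanti hfin1
    have hiInter : (⋂ k : ℕ, {e | (k : ℝ≥0∞) < φ e}) = {e | φ e = ⊤} := by
      ext e
      simp only [Set.mem_iInter, Set.mem_setOf_eq]
      constructor
      · intro h'
        by_contra hne
        obtain ⟨k, hk⟩ := ENNReal.exists_nat_gt hne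
        exact absurd (h' k) (not_lt.2 hk.le)
      · intro h' k
        rw [h']
        exact ENNReal.natCast_lt_top k
    rw [hiInter, hNinfty] at h
    exact h
  -- choose nonatoms
  choose ε hε1 hε2 hε3 using exists_nonatom N φ hφ hfin
  have hεpos : ∀ k, 0 < ε k := fun k => lt_trans (lt_of_lt_of_le zero_lt_one le_add_self) (hε1 k)
  have hεk : ∀ k : ℕ, (k : ℝ≥0∞) < ε k := fun k =>
    lt_of_le_of_lt le_self_add (hε1 k)
  -- bounds in terms of B
  have hAB : ∀ k, N {e | ε k < φ e} ≤ B k := by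
    intro k
    apply measure_mono
    intro e he
    simp only [Set.mem_setOf_eq] at he ⊢
    exact lt_trans (hεk k) he
  have key : ∀ k : ℕ, I ≤ liminf u atTop + B k ∧ limsup u atTop ≤ I + B k := by
    intro k
    obtain ⟨h1, h2⟩ := hbound (ε k) (hεpos k) (hε2 k) (hε3 k)
    constructor
    · calc I = (∫⁻ e in {e | φ e ≤ ε k}, f e ∂N) + ∫⁻ e in {e | ε k < φ e}, f e ∂N := by
            rw [hI]; exact hdec N (ε k)
        _ ≤ liminf u atTop + B k := add_le_add h1 ((htail N (ε k)).trans (hAB k))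
    · calc limsup u atTop ≤ (∫⁻ e in {e | φ e ≤ ε k}, f e ∂N) + N {e | ε k < φ e} := h2
        _ ≤ I + B k := add_le_add (by rw [hI, hdec N (ε k)]; exact le_self_add) (hAB k)
  -- conclude
  have hlim : Tendsto (fun k => I + B k) atTop (𝓝 I) := by
    have := (tendsto_const_nhds : Tendsto (fun _ : ℕ => I) atTop (𝓝 I)).add hB
    simpa using this
  have hlim2 : Tendsto (fun k => liminf u atTop + B k) atTop (𝓝 (liminf u atTop)) := by
    have := (tendsto_const_nhds :
      Tendsto (fun _ : ℕ => liminf u atTop) atTop (𝓝 (liminf u atTop))).add hB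
    simpa using this
  have hP : limsup u atTop ≤ I :=
    ge_of_tendsto hlim (Eventually.of_forall fun k => (key k).2)
  have hQ : I ≤ liminf u atTop :=
    ge_of_tendsto hlim2 (Eventually.of_forall fun k => (key k).1)
  exact tendsto_of_le_liminf_of_limsup_le hQ hP
end
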